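/- arXiv:1909.10179 — 4 statements merged into one kernel-verified Lean document; each statement's English description precedes it below -/
import Mathlib

section
/- Suppose A(t) = F g(t) for all t ≥ 0, and fix gains k_P > B_ξ + B_b and k_I > 0. Then there exist constants a > 0 and C > 0 such that for every differentiable solution (Ā, b̄) : [0,∞) → ℝ^{n×n} × 𝔤 of the observer equations Ā'(t) = Ā(t) ξ_m(t) − A(t) b̄(t) + k_P (A(t) − Ā(t)) and b̄'(t) = −k_I π_𝔤(A(t)ᵀ (A(t) − Ā(t))), the errors E_g(t) = g(t) − F⁻¹ Ā(t) and e_b(t) = b − b̄(t) satisfy ‖E_g(t)‖ + ‖e_b(t)‖ ≤ C (‖E_g(0)‖ + ‖e_b(0)‖) e^{−a t} for all t ≥ 0, with a and C independent of the initial condition (Ā(0), b̄(0)) ∈ ℝ^{n×n} × 𝔤. -/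
open Matrix

attribute [local instance] Matrix.frobeniusNormedAddCommGroup Matrix.frobeniusNormedSpace
attribute [local instance] LieRing.ofAssociativeRing

/-- Frobenius inner product `⟨A,B⟩ = tr(Aᵀ B)` on real square matrices. -/
noncomputable def finner {n : ℕ} (A B : Matrix (Fin n) (Fin n) ℝ) : ℝ := (Aᵀ * B).trace

/-- Minimum singular value: the infimum of `‖M x‖` over unit vectors `x`. -/
noncomputable def sigmaMin {n : ℕ} (M : Matrix (Fin n) (Fin n) ℝ) : ℝ :=
  sInf ((fun x : EuclideanSpace ℝ (Fin n) => ‖(Matrix.toEuclideanCLM (𝕜 := ℝ) M) x‖) '' {x | ‖x‖ = 1})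

/-- Maximum singular value: the supremum of `‖M x‖` over unit vectors `x`. -/
noncomputable def sigmaMax {n : ℕ} (M : Matrix (Fin n) (Fin n) ℝ) : ℝ :=
  sSup ((fun x : EuclideanSpace ℝ (Fin n) => ‖(Matrix.toEuclideanCLM (𝕜 := ℝ) M) x‖) '' {x | ‖x‖ = 1})

/-- Minimum eigenvalue of a symmetric matrix, via the Rayleigh quotient. -/
noncomputable def lambdaMin {n : ℕ} (M : Matrix (Fin n) (Fin n) ℝ) : ℝ :=
  sInf ((fun x : EuclideanSpace ℝ (Fin n) =>
    inner (𝕜 := ℝ) x ((Matrix.toEuclideanCLM (𝕜 := ℝ) M) x)) '' {x | ‖x‖ = 1})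

noncomputable local instance matIPS {n : ℕ} : InnerProductSpace ℝ (Matrix (Fin n) (Fin n) ℝ) where
  __ := (Matrix.frobeniusNormedSpace : NormedSpace ℝ (Matrix (Fin n) (Fin n) ℝ))
  inner A B := ∑ i, ∑ j, A i j * B i j
  norm_sq_eq_re_inner x := by
    change ‖WithLp.toLp 2 (fun i => WithLp.toLp 2 fun j => x i j)‖ ^ 2 = _
    change _ = ∑ i, ∑ j, x i j * x i j
    rw [PiLp.norm_sq_eq_of_L2]
    refine Finset.sum_congr rfl fun i _ => ?_
    rw [PiLp.toLp_apply, PiLp.norm_sq_eq_of_L2]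
    simp [sq]
  conj_inner_symm x y := by
    simp only [starRingEnd_apply, star_trivial]
    exact Finset.sum_congr rfl fun i _ => Finset.sum_congr rfl fun j _ => mul_comm _ _
  add_left x y z := by
    simp only [Matrix.add_apply, add_mul, Finset.sum_add_distrib]
  smul_left x y r := by
    simp only [Matrix.smul_apply, smul_eq_mul, starRingEnd_apply, star_trivial, Finset.mul_sum,
      mul_assoc]

variable {n : ℕ}

lemma finner_eq_inner (A B : Matrix (Fin n) (Fin n) ℝ) :
    finner A B = inner (𝕜 := ℝ) A B := by
  simp only [finner, inner, Matrix.trace, Matrix.mul_apply, Matrix.diag, Matrix.transpose_apply,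
    RCLike.inner_apply, starRingEnd_apply, star_trivial]
  rw [Finset.sum_comm]

lemma inner_eq_sum (A B : Matrix (Fin n) (Fin n) ℝ) :
    inner (𝕜 := ℝ) A B = ∑ i, ∑ j, A i j * B i j := by
  rfl

lemma inner_mul_left' (M X Y : Matrix (Fin n) (Fin n) ℝ) :
    inner (𝕜 := ℝ) (M * X) Y = inner (𝕜 := ℝ) X (Mᵀ * Y) := by
  rw [← finner_eq_inner, ← finner_eq_inner, finner, finner, Matrix.transpose_mul, Matrix.mul_assoc]

/-- column of a matrix as a Euclidean vector -/
noncomputable def colE (X : Matrix (Fin n) (Fin n) ℝ) (j : Fin n) : EuclideanSpace ℝ (Fin n) :=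
  (WithLp.equiv 2 _).symm (fun i => X i j)

lemma norm_sq_eq_sum_cols (X : Matrix (Fin n) (Fin n) ℝ) :
    ‖X‖ ^ 2 = ∑ j, ‖colE X j‖ ^ 2 := by
  rw [← real_inner_self_eq_norm_sq, inner_eq_sum]
  rw [Finset.sum_comm]
  congr 1; funext j
  rw [← real_inner_self_eq_norm_sq]
  rfl

lemma colE_mul (M X : Matrix (Fin n) (Fin n) ℝ) (j : Fin n) :
    colE (M * X) j = Matrix.toEuclideanCLM (𝕜 := ℝ) M (colE X j) := by
  simp only [colE, WithLp.equiv_symm_apply, Matrix.toEuclideanCLM_toLp]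
  congr 1

lemma sigmaMin_nonneg (M : Matrix (Fin n) (Fin n) ℝ) (hn : 0 < n) : 0 ≤ sigmaMin M := by
  apply Real.sInf_nonneg
  rintro r ⟨x, -, rfl⟩
  exact norm_nonneg _

lemma sigmaMin_le (M : Matrix (Fin n) (Fin n) ℝ) (x : EuclideanSpace ℝ (Fin n)) :
    sigmaMin M * ‖x‖ ≤ ‖Matrix.toEuclideanCLM (𝕜 := ℝ) M x‖ := by
  rcases eq_or_ne x 0 with rfl | hx
  · simp
  have hxn : (0:ℝ) < ‖x‖ := norm_pos_iff.mpr hx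
  have hu : ‖(‖x‖)⁻¹ • x‖ = 1 := by
    rw [norm_smul, Real.norm_eq_abs, abs_of_pos (inv_pos.mpr hxn), inv_mul_cancel₀ hxn.ne']
  have h1 : sigmaMin M ≤ ‖Matrix.toEuclideanCLM (𝕜 := ℝ) M ((‖x‖)⁻¹ • x)‖ := by
    apply csInf_le ⟨0, by rintro r ⟨z, -, rfl⟩; exact norm_nonneg _⟩
    exact Set.mem_image_of_mem _ hu
  rw [ContinuousLinearMap.map_smul, norm_smul, Real.norm_eq_abs,
    abs_of_pos (inv_pos.mpr hxn)] at h1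
  calc sigmaMin M * ‖x‖ ≤ (‖x‖⁻¹ * ‖Matrix.toEuclideanCLM (𝕜 := ℝ) M x‖) * ‖x‖ := by
        gcongr
    _ = ‖Matrix.toEuclideanCLM (𝕜 := ℝ) M x‖ := by field_simp

lemma le_sigmaMax (M : Matrix (Fin n) (Fin n) ℝ) (x : EuclideanSpace ℝ (Fin n)) :
    ‖Matrix.toEuclideanCLM (𝕜 := ℝ) M x‖ ≤ sigmaMax M * ‖x‖ := by
  rcases eq_or_ne x 0 with rfl | hx
  · simp
  have hxn : (0:ℝ) < ‖x‖ := norm_pos_iff.mpr hx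
  have hu : ‖(‖x‖)⁻¹ • x‖ = 1 := by
    rw [norm_smul, Real.norm_eq_abs, abs_of_pos (inv_pos.mpr hxn), inv_mul_cancel₀ hxn.ne']
  have hmem : ‖Matrix.toEuclideanCLM (𝕜 := ℝ) M ((‖x‖)⁻¹ • x)‖ ∈
      ((fun z : EuclideanSpace ℝ (Fin n) => ‖(Matrix.toEuclideanCLM (𝕜 := ℝ) M) z‖) ''
        {z | ‖z‖ = 1}) := Set.mem_image_of_mem _ hu
  have h1 : ‖Matrix.toEuclideanCLM (𝕜 := ℝ) M ((‖x‖)⁻¹ • x)‖ ≤ sigmaMax M := by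
    apply le_csSup ⟨‖Matrix.toEuclideanCLM (𝕜 := ℝ) M‖, ?_⟩ hmem
    rintro r ⟨z, hz, rfl⟩
    calc ‖Matrix.toEuclideanCLM (𝕜 := ℝ) M z‖ ≤ ‖Matrix.toEuclideanCLM (𝕜 := ℝ) M‖ * ‖z‖ :=
          (Matrix.toEuclideanCLM (𝕜 := ℝ) M).le_opNorm z
      _ = ‖Matrix.toEuclideanCLM (𝕜 := ℝ) M‖ := by rw [hz, mul_one]
  rw [ContinuousLinearMap.map_smul, norm_smul, Real.norm_eq_abs,
    abs_of_pos (inv_pos.mpr hxn)] at h1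
  have := mul_le_mul_of_nonneg_right h1 hxn.le
  rwa [mul_comm _ (‖Matrix.toEuclideanCLM (𝕜 := ℝ) M x‖), mul_assoc,
    inv_mul_cancel₀ hxn.ne', mul_one] at this

lemma sigmaMax_nonneg (M : Matrix (Fin n) (Fin n) ℝ) (hn : 0 < n) : 0 ≤ sigmaMax M := by
  have : (0:ℝ) ≤ sigmaMax M * ‖(EuclideanSpace.single (⟨0, hn⟩ : Fin n) (1:ℝ))‖ :=
    le_trans (norm_nonneg _) (le_sigmaMax M _)
  simpa using le_trans (by positivity) this

/-- lower bound for Frobenius norm of product -/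
lemma sigmaMin_mul_le (hn : 0 < n) (M X : Matrix (Fin n) (Fin n) ℝ) :
    sigmaMin M * ‖X‖ ≤ ‖M * X‖ := by
  have h0 := sigmaMin_nonneg M hn
  have hsq : (sigmaMin M * ‖X‖)^2 ≤ ‖M * X‖^2 := by
    rw [mul_pow, norm_sq_eq_sum_cols X, norm_sq_eq_sum_cols (M * X), Finset.mul_sum]
    apply Finset.sum_le_sum
    intro j _
    rw [colE_mul, ← mul_pow]
    exact pow_le_pow_left₀ (by positivity) (sigmaMin_le M _) 2
  have := Real.sqrt_le_sqrt hsq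
  rwa [Real.sqrt_sq (by positivity), Real.sqrt_sq (norm_nonneg _)] at this

lemma mul_le_sigmaMax (hn : 0 < n) (M X : Matrix (Fin n) (Fin n) ℝ) :
    ‖M * X‖ ≤ sigmaMax M * ‖X‖ := by
  have h0 := sigmaMax_nonneg M hn
  have hsq : ‖M * X‖^2 ≤ (sigmaMax M * ‖X‖)^2 := by
    rw [mul_pow, norm_sq_eq_sum_cols X, norm_sq_eq_sum_cols (M * X), Finset.mul_sum]
    apply Finset.sum_le_sum
    intro j _
    rw [colE_mul, ← mul_pow]
    exact pow_le_pow_left₀ (norm_nonneg _) (le_sigmaMax M _) 2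
  have := Real.sqrt_le_sqrt hsq
  rwa [Real.sqrt_sq (norm_nonneg _), Real.sqrt_sq (by positivity)] at this

/-- scalar Grönwall inequality via derivatives -/
lemma gronwall_scalar {W W' : ℝ → ℝ} {K : ℝ}
    (hW : ∀ t ≥ (0:ℝ), HasDerivAt W (W' t) t)
    (hle : ∀ t ≥ (0:ℝ), W' t ≤ K * W t) :
    ∀ t ≥ (0:ℝ), W t ≤ W 0 * Real.exp (K * t) := by
  intro t ht
  have key := le_gronwallBound_of_liminf_deriv_right_le (f := W) (f' := W') (δ := W 0)
    (K := K) (ε := 0) (a := 0) (b := t)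
    (fun s hs => ((hW s hs.1).continuousAt.continuousWithinAt))
    ?_ le_rfl (fun s hs => by simpa using hle s hs.1) t ⟨ht, le_rfl⟩
  · simpa [gronwallBound_ε0] using key
  · intro s hs r hr
    have hslope : Filter.Tendsto (slope W s) (nhdsWithin s {s}ᶜ) (nhds (W' s)) :=
      hasDerivAt_iff_tendsto_slope.mp (hW s hs.1)
    have hslope' : Filter.Tendsto (slope W s) (nhdsWithin s (Set.Ioi s)) (nhds (W' s)) :=
      hslope.mono_left (nhdsWithin_mono s fun z hz => ne_of_gt hz)
    have hev : ∀ᶠ z in nhdsWithin s (Set.Ioi s), slope W s z < r :=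
      hslope' (Iio_mem_nhds hr)
    apply hev.frequently.mono
    intro z hz
    simpa [slope_def_field, div_eq_inv_mul] using hz

lemma norm_proj_le
    (𝔤 : LieSubalgebra ℝ (Matrix (Fin n) (Fin n) ℝ))
    (proj : Matrix (Fin n) (Fin n) ℝ →ₗ[ℝ] Matrix (Fin n) (Fin n) ℝ)
    (hproj_mem : ∀ X, proj X ∈ 𝔤)
    (hproj_orth : ∀ X, ∀ Y ∈ 𝔤, finner (X - proj X) Y = 0)
    (X : Matrix (Fin n) (Fin n) ℝ) : ‖proj X‖ ≤ ‖X‖ := by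
  have horth : inner (𝕜 := ℝ) (X - proj X) (proj X) = 0 := by
    rw [← finner_eq_inner]; exact hproj_orth X _ (hproj_mem X)
  have hpyth : ‖X‖^2 = ‖X - proj X‖^2 + ‖proj X‖^2 := by
    have := norm_add_sq_real (X - proj X) (proj X)
    simpa [horth] using this
  have h2 : ‖proj X‖^2 ≤ ‖X‖^2 := by nlinarith [sq_nonneg ‖X - proj X‖]
  have := Real.sqrt_le_sqrt h2
  rwa [Real.sqrt_sq (norm_nonneg _), Real.sqrt_sq (norm_nonneg _)] at this

lemma inner_proj_eq
    (𝔤 : LieSubalgebra ℝ (Matrix (Fin n) (Fin n) ℝ))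
    (proj : Matrix (Fin n) (Fin n) ℝ →ₗ[ℝ] Matrix (Fin n) (Fin n) ℝ)
    (hproj_orth : ∀ X, ∀ Y ∈ 𝔤, finner (X - proj X) Y = 0)
    (X Y : Matrix (Fin n) (Fin n) ℝ) (hY : Y ∈ 𝔤) :
    inner (𝕜 := ℝ) Y (proj X) = inner (𝕜 := ℝ) Y X := by
  have horth : inner (𝕜 := ℝ) (X - proj X) Y = 0 := by
    rw [← finner_eq_inner]; exact hproj_orth X Y hY
  rw [inner_sub_left] at horth
  have c1 := real_inner_comm Y (proj X)
  have c2 := real_inner_comm Y X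
  linarith [horth, c1, c2]


lemma young_gen {c c₀ x y : ℝ} (hc₀ : 0 < c₀) :
    c*(x*y) ≤ c^2/(2*c₀)*x^2 + c₀/2*y^2 := by
  have h4 : c*(x*y) ≤ (c^2*x^2 + c₀^2*y^2)/(2*c₀) := by
    rw [le_div_iff₀ (by positivity)]
    nlinarith [sq_nonneg (c*x - c₀*y)]
  have h5 : (c^2*x^2 + c₀^2*y^2)/(2*c₀) = c^2/(2*c₀)*x^2 + c₀/2*y^2 := by
    field_simp
  linarith

lemma young_quarter {u kI x y : ℝ} (hu : 0 ≤ u) (hkI : 0 < kI)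
    (h1 : u*kI ≤ 1/2) (h2 : u ≤ 1/2) :
    u*(x*y) ≤ 1/4*x^2 + 1/4*(1/kI)*y^2 := by
  have hukI : 0 ≤ u*kI := mul_nonneg hu hkI.le
  have hsq2 : u*(u*kI) ≤ 1/4 := by
    calc u*(u*kI) ≤ (1/2)*(1/2) := mul_le_mul h2 h1 hukI (by norm_num)
      _ = 1/4 := by norm_num
  have hprod : u*(u*kI)*(kI*x^2) ≤ (1/4)*(kI*x^2) :=
    mul_le_mul_of_nonneg_right hsq2 (by positivity)
  have h3 : 4*(u*kI)*(x*y) ≤ kI*x^2 + y^2 := by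
    nlinarith [sq_nonneg (2*u*kI*x - y), hprod]
  have h4 : u*(x*y) ≤ (kI*x^2+y^2)/(4*kI) := by
    rw [le_div_iff₀ (by positivity)]
    nlinarith [h3]
  have h5 : (kI*x^2+y^2)/(4*kI) = 1/4*x^2 + 1/4*(1/kI)*y^2 := by
    field_simp
  linarith

lemma aux_sq1 (x y : ℝ) : (x+y)^2 ≤ 2*(x^2+y^2) := by nlinarith [sq_nonneg (x-y)]

lemma aux_sq2 {x y : ℝ} (hx : 0 ≤ x) (hy : 0 ≤ y) : x^2+y^2 ≤ (x+y)^2 := by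
  nlinarith [mul_nonneg hx hy]

lemma aux_le_of_sq {A B : ℝ} (hA : 0 ≤ A) (hB : 0 ≤ B) (h : A^2 ≤ B^2) : A ≤ B := by
  nlinarith

lemma main_ineq {S1 S2 S3 S4 S5 Q2 W' x y m kP eps d Bxi c4 c c0 al X : ℝ}
    (hWs : W' = S1 - kP * x^2 + eps * (S2 + S3 + (S4 - Q2 - kP * S5)))
    (nb1 : S1 ≤ m*(x*x))
    (f2u : eps * S2 ≤ eps * (d*Bxi*(x*y)))
    (f3u : eps * S3 ≤ eps * (c4*(x*x)))
    (f4u : eps * S4 ≤ eps * (m*d*(x*y)))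
    (f5l : (eps*kP) * (-(d*(x*y))) ≤ (eps*kP) * S5)
    (fql : eps * (c0*(y*y)) ≤ eps * Q2)
    (hconv : eps*(d*Bxi*(x*y)) + eps*(m*d*(x*y)) + (eps*kP)*(d*(x*y)) = eps*(c*(x*y)))
    (h2y : eps*(c*(x*y)) ≤ eps*(c^2/(2*c0)*x^2 + c0/2*y^2))
    (h3y : eps*X*x^2 ≤ (al/2)*x^2)
    (hXconv : eps*X*x^2 = eps*(c4*(x*x)) + eps*(c^2/(2*c0))*x^2)
    (hadef : al = kP - m) :
    W' ≤ -(al/2)*x^2 - (eps*c0/2)*y^2 := by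
  nlinarith [hWs, nb1, f2u, f3u, f4u, f5l, fql, hconv, h2y, h3y, hXconv, hadef]

lemma cmp_lemma {W' W x y al eps c0 a kI : ℝ}
    (hmain : W' ≤ -(al/2)*x^2 - (eps*c0/2)*y^2)
    (hub2 : (2*a)*W ≤ (2*a)*(3/4*x^2 + 3/4*(1/kI)*y^2))
    (hax : (3/2)*a*x^2 ≤ (al/2)*x^2)
    (hay : ((3/2)*a*(1/kI))*y^2 ≤ (eps*c0/2)*y^2) :
    W' ≤ (-(2*a))*W := by linarith

lemma e1_lemma {X Y BI P M1 kI W : ℝ}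
    (hXsq : X^2 ≤ BI^2*P^2)
    (hM1P : BI^2*P^2 ≤ M1*P^2)
    (hYsq : Y^2 ≤ M1*(1/kI)*Y^2)
    (hlow4 : M1*P^2 + M1*(1/kI)*Y^2 ≤ 4*M1*W) :
    X^2 + Y^2 ≤ 4*M1*W := by linarith

lemma chain_lemma {A B V1 V2 V3 V4 V5 RHS : ℝ}
    (p1 : A ≤ 2*B) (e1 : B ≤ V1) (e5 : V1 ≤ V2) (e4' : V2 ≤ V3)
    (hc : V3 = V4) (p3 : V4 ≤ V5) (h2 : RHS = 2*V5) : A ≤ RHS := by linarith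

lemma e3_lemma {W0 P0 E0 Y0 BF M2 kI : ℝ}
    (hup0 : W0 ≤ 3/4*P0^2 + 3/4*(1/kI)*Y0^2)
    (hX0sq : P0^2 ≤ BF^2*E0^2)
    (hM2e : BF^2*E0^2 ≤ M2*E0^2)
    (hM2y : (1/kI)*Y0^2 ≤ M2*Y0^2) :
    W0 ≤ 3/4*M2*(E0^2 + Y0^2) := by nlinarith

set_option maxHeartbeats 1600000 in
theorem observer_I_group_error_GES {n : ℕ}
    (𝔤 : LieSubalgebra ℝ (Matrix (Fin n) (Fin n) ℝ))
    (proj : Matrix (Fin n) (Fin n) ℝ →ₗ[ℝ] Matrix (Fin n) (Fin n) ℝ)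
    (hproj_mem : ∀ X, proj X ∈ 𝔤)
    (hproj_id : ∀ X ∈ 𝔤, proj X = X)
    (hproj_orth : ∀ X, ∀ Y ∈ 𝔤, finner (X - proj X) Y = 0)
    (g ξ : ℝ → Matrix (Fin n) (Fin n) ℝ)
    (hξmem : ∀ t, ξ t ∈ 𝔤)
    (hg : ∀ t ≥ (0:ℝ), HasDerivAt g (g t * ξ t) t)
    (Bξ Bb Lg Ug : ℝ)
    (hBξ : 0 < Bξ) (hBb : 0 < Bb) (hLg : 0 < Lg) (hUg : 0 < Ug)
    (hξbd : ∀ t ≥ (0:ℝ), ‖ξ t‖ ≤ Bξ)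
    (hσ : ∀ t ≥ (0:ℝ), Lg ≤ sigmaMin (g t) ∧ sigmaMax (g t) ≤ Ug)
    (b : Matrix (Fin n) (Fin n) ℝ) (hbmem : b ∈ 𝔤) (hbbd : ‖b‖ ≤ Bb)
    (ξm : ℝ → Matrix (Fin n) (Fin n) ℝ) (hξm : ∀ t, ξm t = ξ t + b)
    (F : Matrix (Fin n) (Fin n) ℝ) (hF : IsUnit F)
    (A : ℝ → Matrix (Fin n) (Fin n) ℝ)
    (hA : ∀ t ≥ (0:ℝ), A t = F * g t)
    (kP kI : ℝ) (hkP : Bξ + Bb < kP) (hkI : 0 < kI) :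
    ∃ a > (0:ℝ), ∃ C > (0:ℝ),
      ∀ Abar bbar : ℝ → Matrix (Fin n) (Fin n) ℝ,
        (∀ t, bbar t ∈ 𝔤) →
        (∀ t ≥ (0:ℝ), HasDerivAt Abar (Abar t * ξm t - A t * bbar t + kP • (A t - Abar t)) t) →
        (∀ t ≥ (0:ℝ), HasDerivAt bbar (-(kI • proj ((A t)ᵀ * (A t - Abar t)))) t) →
        ∀ t ≥ (0:ℝ),
          ‖g t - F⁻¹ * Abar t‖ + ‖b - bbar t‖ ≤
            C * (‖g 0 - F⁻¹ * Abar 0‖ + ‖b - bbar 0‖) * Real.exp (-(a * t)) := by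
  classical
  letI : NormedRing (Matrix (Fin n) (Fin n) ℝ) := Matrix.frobeniusNormedRing
  letI : NormedAlgebra ℝ (Matrix (Fin n) (Fin n) ℝ) := Matrix.frobeniusNormedAlgebra
  rcases Nat.eq_zero_or_pos n with hn0 | hn
  · -- degenerate case n = 0 : hypotheses on singular values are contradictory
    exfalso
    subst hn0
    have h1 := (hσ 0 le_rfl).1
    have hemp : {x : EuclideanSpace ℝ (Fin 0) | ‖x‖ = 1} = ∅ := by
      ext x
      simp [Subsingleton.elim x 0]
    rw [sigmaMin, hemp, Set.image_empty, Real.sInf_empty] at h1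
    linarith
  -- main case
  have hFdet : IsUnit F.det := (Matrix.isUnit_iff_isUnit_det F).mp hF
  have hFinv : F⁻¹ * F = 1 := Matrix.nonsing_inv_mul F hFdet
  have hFinv' : F * F⁻¹ = 1 := Matrix.mul_nonsing_inv F hFdet
  have l1 : ∀ X : Matrix (Fin n) (Fin n) ℝ, F⁻¹ * (F * X) = X := fun X => by
    rw [← mul_assoc, hFinv, one_mul]
  have l2 : ∀ X : Matrix (Fin n) (Fin n) ℝ, F * (F⁻¹ * X) = X := fun X => by
    rw [← mul_assoc, hFinv', one_mul]
  -- opaque constants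
  obtain ⟨BF, hBFdef⟩ : ∃ x : ℝ, x = ‖F‖ + 1 := ⟨_, rfl⟩
  have hBF0 : 0 < BF := by rw [hBFdef]; positivity
  have hBF : ‖F‖ ≤ BF := by rw [hBFdef]; linarith [norm_nonneg F]
  obtain ⟨BI, hBIdef⟩ : ∃ x : ℝ, x = ‖F⁻¹‖ + 1 := ⟨_, rfl⟩
  have hBI0 : 0 < BI := by rw [hBIdef]; positivity
  have hBI : ‖F⁻¹‖ ≤ BI := by rw [hBIdef]; linarith [norm_nonneg F⁻¹]
  have hone2 : ‖(1 : Matrix (Fin n) (Fin n) ℝ)‖^2 = (n:ℝ) := by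
    rw [← real_inner_self_eq_norm_sq, inner_eq_sum]
    simp [Matrix.one_apply]
  obtain ⟨Bg, hBgdef⟩ : ∃ x : ℝ, x = Real.sqrt n * Ug + 1 := ⟨_, rfl⟩
  have hBg0 : 0 < Bg := by
    rw [hBgdef]
    have h1 := Real.sqrt_nonneg (n:ℝ)
    have h2 : 0 ≤ Real.sqrt (n:ℝ) * Ug := mul_nonneg h1 hUg.le
    linarith
  have hgb : ∀ t ≥ (0:ℝ), ‖g t‖ ≤ Bg := by
    intro t ht
    have h1 : ‖g t * 1‖ ≤ sigmaMax (g t) * ‖(1 : Matrix (Fin n) (Fin n) ℝ)‖ :=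
      mul_le_sigmaMax hn _ _
    rw [mul_one] at h1
    have h2 := (hσ t ht).2
    have h3 : ‖(1 : Matrix (Fin n) (Fin n) ℝ)‖ = Real.sqrt n := by
      rw [← hone2, Real.sqrt_sq (norm_nonneg _)]
    have h4 : (0:ℝ) ≤ Real.sqrt n := Real.sqrt_nonneg _
    rw [h3] at h1
    have h5 : sigmaMax (g t) * Real.sqrt n ≤ Ug * Real.sqrt n :=
      mul_le_mul_of_nonneg_right h2 h4
    rw [hBgdef]
    have h6 : 0 ≤ Real.sqrt (n:ℝ) := Real.sqrt_nonneg _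
    linarith [h1, h5]
  obtain ⟨m, hmdef⟩ : ∃ x : ℝ, x = Bξ + Bb := ⟨_, rfl⟩
  have hm0 : 0 < m := by rw [hmdef]; linarith
  have hm : ∀ t ≥ (0:ℝ), ‖ξm t‖ ≤ m := by
    intro t ht
    rw [hξm t, hmdef]
    exact (norm_add_le _ _).trans (add_le_add (hξbd t ht) hbbd)
  obtain ⟨α, hαdef⟩ : ∃ x : ℝ, x = kP - m := ⟨_, rfl⟩
  have hα0 : 0 < α := by rw [hαdef, hmdef]; linarith
  have hkP0 : 0 < kP := by rw [hmdef] at hm0; linarith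
  obtain ⟨d, hddef⟩ : ∃ x : ℝ, x = BF * Bg := ⟨_, rfl⟩
  have hd0 : 0 < d := by rw [hddef]; exact mul_pos hBF0 hBg0
  obtain ⟨c, hcdef⟩ : ∃ x : ℝ, x = d * (m + kP + Bξ) := ⟨_, rfl⟩
  have hc0 : 0 < c := by rw [hcdef]; exact mul_pos hd0 (by linarith)
  obtain ⟨c₀, hc₀def⟩ : ∃ x : ℝ, x = (Lg / BI)^2 := ⟨_, rfl⟩
  have hc₀0 : 0 < c₀ := by rw [hc₀def]; exact pow_pos (div_pos hLg hBI0) 2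
  obtain ⟨c₄, hc₄def⟩ : ∃ x : ℝ, x = kI * BF^2 * Bg^2 := ⟨_, rfl⟩
  have hc₄0 : 0 < c₄ := by
    rw [hc₄def]; exact mul_pos (mul_pos hkI (pow_pos hBF0 2)) (pow_pos hBg0 2)
  obtain ⟨X, hXdef⟩ : ∃ x : ℝ, x = c₄ + c^2/(2*c₀) := ⟨_, rfl⟩
  have hX0 : 0 < X := by
    rw [hXdef]
    have h1 : 0 ≤ c^2/(2*c₀) := div_nonneg (sq_nonneg c) (by linarith)
    linarith
  obtain ⟨ε, hεdef⟩ : ∃ x : ℝ, x = min (α / (2*X)) (min (1/(2*d*kI)) (1/(2*d))) := ⟨_, rfl⟩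
  have h2dk : (0:ℝ) < 2*d*kI := mul_pos (mul_pos (by norm_num) hd0) hkI
  have h2d : (0:ℝ) < 2*d := by linarith
  have hε0 : 0 < ε := by
    rw [hεdef]
    exact lt_min (div_pos hα0 (by linarith)) (lt_min (div_pos one_pos h2dk)
      (div_pos one_pos h2d))
  have hε1 : ε * X ≤ α/2 := by
    have h : ε ≤ α/(2*X) := by rw [hεdef]; exact min_le_left _ _
    calc ε * X ≤ (α/(2*X)) * X := mul_le_mul_of_nonneg_right h hX0.le
      _ = α/2 := by field_simp [hX0.ne']
  have hε2 : ε * d * kI ≤ 1/2 := by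
    have h : ε ≤ 1/(2*d*kI) := by
      rw [hεdef]; exact le_trans (min_le_right _ _) (min_le_left _ _)
    calc ε * d * kI ≤ (1/(2*d*kI)) * d * kI := by
          apply mul_le_mul_of_nonneg_right _ hkI.le
          exact mul_le_mul_of_nonneg_right h hd0.le
      _ = 1/2 := by field_simp [hd0.ne', hkI.ne']
  have hε3 : ε * d ≤ 1/2 := by
    have h : ε ≤ 1/(2*d) := by
      rw [hεdef]; exact le_trans (min_le_right _ _) (min_le_right _ _)
    calc ε * d ≤ (1/(2*d)) * d := mul_le_mul_of_nonneg_right h hd0.le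
      _ = 1/2 := by field_simp [hd0.ne']
  obtain ⟨a, hadef⟩ : ∃ x : ℝ, x = min (α/3) (ε*c₀*kI/3) := ⟨_, rfl⟩
  have ha0 : 0 < a := by
    rw [hadef]
    exact lt_min (by linarith) (by positivity)
  have haα : a ≤ α/3 := by rw [hadef]; exact min_le_left _ _
  have haε : a ≤ ε*c₀*kI/3 := by rw [hadef]; exact min_le_right _ _
  obtain ⟨M1, hM1def⟩ : ∃ x : ℝ, x = max (BI^2) kI := ⟨_, rfl⟩
  have hM1BI : BI^2 ≤ M1 := by rw [hM1def]; exact le_max_left _ _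
  have hM1kI : kI ≤ M1 := by rw [hM1def]; exact le_max_right _ _
  have hM1pos : 0 < M1 := lt_of_lt_of_le hkI hM1kI
  obtain ⟨M2, hM2def⟩ : ∃ x : ℝ, x = max (BF^2) (1/kI) := ⟨_, rfl⟩
  have hM2BF : BF^2 ≤ M2 := by rw [hM2def]; exact le_max_left _ _
  have hM2k : 1/kI ≤ M2 := by rw [hM2def]; exact le_max_right _ _
  have hM2pos : 0 < M2 := lt_of_lt_of_le (by positivity) hM2k
  obtain ⟨C₁, hC₁def⟩ : ∃ x : ℝ, x = 3 * M1 * M2 := ⟨_, rfl⟩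
  have hC₁0 : 0 < C₁ := by
    rw [hC₁def]; exact mul_pos (mul_pos (by norm_num) hM1pos) hM2pos
  obtain ⟨C, hCdef⟩ : ∃ x : ℝ, x = Real.sqrt (2*C₁) := ⟨_, rfl⟩
  have hC0 : 0 < C := by rw [hCdef]; exact Real.sqrt_pos.mpr (by linarith)
  have hC2 : C^2 = 2*C₁ := by rw [hCdef]; exact Real.sq_sqrt (by linarith)
  refine ⟨a, ha0, C, hC0, ?_⟩
  intro Abar bbar hbbarmem hAbar' hbbar'
  -- error signals
  set Eg : ℝ → Matrix (Fin n) (Fin n) ℝ := fun s => g s - F⁻¹ * Abar s with hEgdef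
  set eb : ℝ → Matrix (Fin n) (Fin n) ℝ := fun s => b - bbar s with hebdef
  set P : ℝ → Matrix (Fin n) (Fin n) ℝ := fun s => F * Eg s with hPdef
  set q : ℝ → Matrix (Fin n) (Fin n) ℝ := fun s => F * (g s * eb s) with hqdef
  set Z : ℝ → Matrix (Fin n) (Fin n) ℝ := fun s => (g s)ᵀ * (Fᵀ * P s) with hZdef
  set De : ℝ → Matrix (Fin n) (Fin n) ℝ := fun s => kI • proj (Z s) with hDedef
  set DE : ℝ → Matrix (Fin n) (Fin n) ℝ :=
    fun s => Eg s * ξm s - g s * eb s - kP • Eg s with hDEdef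
  have hebmem : ∀ s, eb s ∈ 𝔤.toSubmodule := fun s =>
    Submodule.sub_mem _ hbmem (hbbarmem s)
  have hPA : ∀ s ≥ (0:ℝ), P s = A s - Abar s := by
    intro s hs
    simp only [hPdef, hEgdef, hA s hs, mul_sub, l2]
  -- derivative of Eg
  have hE' : ∀ s ≥ (0:ℝ), HasDerivAt Eg (DE s) s := by
    intro s hs
    have h1 := (hg s hs).sub ((hAbar' s hs).const_mul (F⁻¹))
    refine (h1 : HasDerivAt Eg _ s).congr_deriv ?_
    simp only [hDEdef, hEgdef, hebdef, hA s hs, hξm s, mul_add, mul_sub, add_mul, sub_mul,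
      Matrix.mul_smul, smul_sub, mul_assoc, l1]
    abel
  -- derivative of eb
  have he' : ∀ s ≥ (0:ℝ), HasDerivAt eb (De s) s := by
    intro s hs
    have h1 := (hasDerivAt_const s b).sub (hbbar' s hs)
    have h2 : (A s)ᵀ * (A s - Abar s) = Z s := by
      rw [← hPA s hs, hZdef, hA s hs, Matrix.transpose_mul, mul_assoc]
    refine (h1 : HasDerivAt eb _ s).congr_deriv ?_
    simp only [hDedef, h2]
    simp
  -- derivatives of P and q
  have hP' : ∀ s ≥ (0:ℝ), HasDerivAt P (F * DE s) s := fun s hs =>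
    (hE' s hs).const_mul F
  have hq' : ∀ s ≥ (0:ℝ), HasDerivAt q (F * ((g s * ξ s) * eb s + g s * De s)) s :=
    fun s hs => ((hg s hs).mul (he' s hs)).const_mul F
  -- the Lyapunov function and its derivative
  set W : ℝ → ℝ := fun s => 1/2 * inner (𝕜 := ℝ) (P s) (P s)
      + 1/2*(1/kI) * inner (𝕜 := ℝ) (eb s) (eb s) + ε * inner (𝕜 := ℝ) (P s) (q s) with hWdef
  set W' : ℝ → ℝ := fun s =>
      1/2 * (inner (𝕜 := ℝ) (P s) (F * DE s) + inner (𝕜 := ℝ) (F * DE s) (P s))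
      + 1/2*(1/kI) * (inner (𝕜 := ℝ) (eb s) (De s) + inner (𝕜 := ℝ) (De s) (eb s))
      + ε * (inner (𝕜 := ℝ) (P s) (F * ((g s * ξ s) * eb s + g s * De s))
             + inner (𝕜 := ℝ) (F * DE s) (q s)) with hW'def
  have hW' : ∀ s ≥ (0:ℝ), HasDerivAt W (W' s) s := by
    intro s hs
    exact ((((hP' s hs).inner ℝ (hP' s hs)).const_mul (1/2 : ℝ)).add
      (((he' s hs).inner ℝ (he' s hs)).const_mul (1/2*(1/kI) : ℝ))).add
      (((hP' s hs).inner ℝ (hq' s hs)).const_mul ε)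
  -- key algebraic identities
  have hFDE : ∀ s, F * DE s = P s * ξm s - q s - kP • P s := by
    intro s
    simp only [hDEdef, hPdef, hqdef, mul_sub, Matrix.mul_smul, mul_assoc]
  have hinner_e_De : ∀ s, inner (𝕜 := ℝ) (eb s) (De s) = kI * inner (𝕜 := ℝ) (P s) (q s) := by
    intro s
    have h1 : inner (𝕜 := ℝ) (eb s) (De s) = kI * inner (𝕜 := ℝ) (eb s) (proj (Z s)) := by
      simp only [hDedef, real_inner_smul_right]
    rw [h1, inner_proj_eq 𝔤 proj hproj_orth (Z s) (eb s) (hebmem s)]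
    congr 1
    have h2 : Z s = (g s)ᵀ * (Fᵀ * P s) := by simp only [hZdef]
    have h3 : q s = F * (g s * eb s) := by simp only [hqdef]
    rw [h2, ← inner_mul_left' (g s) (eb s) (Fᵀ * P s), ← inner_mul_left' F (g s * eb s) (P s),
      real_inner_comm, h3]
  -- pointwise norm bounds
  have hq_up : ∀ s ≥ (0:ℝ), ‖q s‖ ≤ d * ‖eb s‖ := by
    intro s hs
    have hqs : q s = F * (g s * eb s) := by simp only [hqdef]
    rw [hqs]
    calc ‖F * (g s * eb s)‖ ≤ ‖F‖ * ‖g s * eb s‖ := Matrix.frobenius_norm_mul _ _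
      _ ≤ ‖F‖ * (‖g s‖ * ‖eb s‖) :=
          mul_le_mul_of_nonneg_left (Matrix.frobenius_norm_mul _ _) (norm_nonneg _)
      _ ≤ BF * (Bg * ‖eb s‖) := by
          apply mul_le_mul hBF _ (by positivity) hBF0.le
          exact mul_le_mul_of_nonneg_right (hgb s hs) (norm_nonneg _)
      _ = d * ‖eb s‖ := by rw [hddef]; ring
  have habs5 : ∀ s ≥ (0:ℝ), |inner (𝕜 := ℝ) (P s) (q s)| ≤ d*(‖P s‖*‖eb s‖) := by
    intro s hs
    calc |inner (𝕜 := ℝ) (P s) (q s)| ≤ ‖P s‖ * ‖q s‖ := abs_real_inner_le_norm _ _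
      _ ≤ ‖P s‖ * (d * ‖eb s‖) := mul_le_mul_of_nonneg_left (hq_up s hs) (norm_nonneg _)
      _ = d*(‖P s‖*‖eb s‖) := by ring
  have hWub : ∀ s ≥ (0:ℝ), W s ≤ 3/4*‖P s‖^2 + 3/4*(1/kI)*‖eb s‖^2 := by
    intro s hs
    have hWeq : W s = 1/2*‖P s‖^2 + 1/2*(1/kI)*‖eb s‖^2
        + ε * inner (𝕜 := ℝ) (P s) (q s) := by
      simp only [hWdef, real_inner_self_eq_norm_sq]
    have h5 : ε * inner (𝕜 := ℝ) (P s) (q s) ≤ ε * (d*(‖P s‖*‖eb s‖)) :=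
      mul_le_mul_of_nonneg_left (abs_le.mp (habs5 s hs)).2 hε0.le
    have hyq : (ε*d)*(‖P s‖*‖eb s‖) ≤ 1/4*‖P s‖^2 + 1/4*(1/kI)*‖eb s‖^2 :=
      young_quarter (mul_nonneg hε0.le hd0.le) hkI hε2 hε3
    linarith [hWeq, h5, hyq]
  have hWlb : ∀ s ≥ (0:ℝ), 1/4*‖P s‖^2 + 1/4*(1/kI)*‖eb s‖^2 ≤ W s := by
    intro s hs
    have hWeq : W s = 1/2*‖P s‖^2 + 1/2*(1/kI)*‖eb s‖^2
        + ε * inner (𝕜 := ℝ) (P s) (q s) := by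
      simp only [hWdef, real_inner_self_eq_norm_sq]
    have h5 : ε * (-(d*(‖P s‖*‖eb s‖))) ≤ ε * inner (𝕜 := ℝ) (P s) (q s) :=
      mul_le_mul_of_nonneg_left (abs_le.mp (habs5 s hs)).1 hε0.le
    have hyq : (ε*d)*(‖P s‖*‖eb s‖) ≤ 1/4*‖P s‖^2 + 1/4*(1/kI)*‖eb s‖^2 :=
      young_quarter (mul_nonneg hε0.le hd0.le) hkI hε2 hε3
    linarith [hWeq, h5, hyq]
  have hWle : ∀ s ≥ (0:ℝ), W' s ≤ (-(2*a)) * W s := by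
    intro s hs
    have hx0 : (0:ℝ) ≤ ‖P s‖ := norm_nonneg _
    have hy0 : (0:ℝ) ≤ ‖eb s‖ := norm_nonneg _
    have hgs : ‖g s‖ ≤ Bg := hgb s hs
    have hms : ‖ξm s‖ ≤ m := hm s hs
    have eq1 : inner (𝕜 := ℝ) (P s) (F * DE s)
        = inner (𝕜 := ℝ) (P s) (P s * ξm s) - inner (𝕜 := ℝ) (P s) (q s)
          - kP * inner (𝕜 := ℝ) (P s) (P s) := by
      rw [hFDE s, inner_sub_right, inner_sub_right, real_inner_smul_right]
    have eq2 : inner (𝕜 := ℝ) (F * DE s) (P s)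
        = inner (𝕜 := ℝ) (P s) (P s * ξm s) - inner (𝕜 := ℝ) (P s) (q s)
          - kP * inner (𝕜 := ℝ) (P s) (P s) := by
      rw [real_inner_comm]; exact eq1
    have eq3 : inner (𝕜 := ℝ) (F * DE s) (q s)
        = inner (𝕜 := ℝ) (P s * ξm s) (q s) - inner (𝕜 := ℝ) (q s) (q s)
          - kP * inner (𝕜 := ℝ) (P s) (q s) := by
      rw [hFDE s, inner_sub_left, inner_sub_left, real_inner_smul_left]
    have eq4 : inner (𝕜 := ℝ) (De s) (eb s) = kI * inner (𝕜 := ℝ) (P s) (q s) := by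
      rw [real_inner_comm]; exact hinner_e_De s
    have eq5 : inner (𝕜 := ℝ) (P s) (F * ((g s * ξ s) * eb s + g s * De s))
        = inner (𝕜 := ℝ) (P s) (F * ((g s * ξ s) * eb s))
          + inner (𝕜 := ℝ) (P s) (F * (g s * De s)) := by
      rw [mul_add, inner_add_right]
    have hWs : W' s = inner (𝕜 := ℝ) (P s) (P s * ξm s) - kP * ‖P s‖^2
        + ε * (inner (𝕜 := ℝ) (P s) (F * ((g s * ξ s) * eb s))
               + inner (𝕜 := ℝ) (P s) (F * (g s * De s))
               + (inner (𝕜 := ℝ) (P s * ξm s) (q s) - ‖q s‖^2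
                  - kP * inner (𝕜 := ℝ) (P s) (q s))) := by
      simp only [hW'def]
      rw [eq1, eq2, eq3, eq5, hinner_e_De s, eq4, real_inner_self_eq_norm_sq,
        real_inner_self_eq_norm_sq]
      field_simp
      ring
    -- norm bounds
    have hPxm : ‖P s * ξm s‖ ≤ ‖P s‖ * m := by
      calc ‖P s * ξm s‖ ≤ ‖P s‖ * ‖ξm s‖ := Matrix.frobenius_norm_mul _ _
        _ ≤ ‖P s‖ * m := mul_le_mul_of_nonneg_left hms hx0
    have hDe_bd : ‖De s‖ ≤ kI * (Bg * (BF * ‖P s‖)) := by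
      have hDs : De s = kI • proj (Z s) := by simp only [hDedef]
      rw [hDs, norm_smul, Real.norm_eq_abs, abs_of_pos hkI]
      apply mul_le_mul_of_nonneg_left _ hkI.le
      calc ‖proj (Z s)‖ ≤ ‖Z s‖ := norm_proj_le 𝔤 proj hproj_mem hproj_orth _
        _ = ‖(g s)ᵀ * (Fᵀ * P s)‖ := by simp only [hZdef]
        _ ≤ ‖(g s)ᵀ‖ * ‖Fᵀ * P s‖ := Matrix.frobenius_norm_mul _ _
        _ ≤ ‖(g s)ᵀ‖ * (‖Fᵀ‖ * ‖P s‖) :=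
            mul_le_mul_of_nonneg_left (Matrix.frobenius_norm_mul _ _) (norm_nonneg _)
        _ ≤ Bg * (BF * ‖P s‖) := by
            rw [Matrix.frobenius_norm_transpose, Matrix.frobenius_norm_transpose]
            apply mul_le_mul hgs _ (by positivity) hBg0.le
            exact mul_le_mul_of_nonneg_right hBF hx0
    -- inner product bounds
    have nb1 : inner (𝕜 := ℝ) (P s) (P s * ξm s) ≤ m*(‖P s‖*‖P s‖) := by
      calc inner (𝕜 := ℝ) (P s) (P s * ξm s) ≤ ‖P s‖ * ‖P s * ξm s‖ := real_inner_le_norm _ _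
        _ ≤ ‖P s‖ * (‖P s‖ * m) := mul_le_mul_of_nonneg_left hPxm hx0
        _ = m*(‖P s‖*‖P s‖) := by ring
    have habs2 : |inner (𝕜 := ℝ) (P s) (F * ((g s * ξ s) * eb s))| ≤ d*Bξ*(‖P s‖*‖eb s‖) := by
      calc |inner (𝕜 := ℝ) (P s) (F * ((g s * ξ s) * eb s))|
          ≤ ‖P s‖ * ‖F * ((g s * ξ s) * eb s)‖ := abs_real_inner_le_norm _ _
        _ ≤ ‖P s‖ * (BF * (Bg * Bξ * ‖eb s‖)) := by
            apply mul_le_mul_of_nonneg_left _ hx0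
            calc ‖F * ((g s * ξ s) * eb s)‖ ≤ ‖F‖ * ‖(g s * ξ s) * eb s‖ :=
                  Matrix.frobenius_norm_mul _ _
              _ ≤ ‖F‖ * (‖g s * ξ s‖ * ‖eb s‖) :=
                  mul_le_mul_of_nonneg_left (Matrix.frobenius_norm_mul _ _) (norm_nonneg _)
              _ ≤ ‖F‖ * (‖g s‖ * ‖ξ s‖ * ‖eb s‖) := by
                  apply mul_le_mul_of_nonneg_left _ (norm_nonneg F)
                  exact mul_le_mul_of_nonneg_right (Matrix.frobenius_norm_mul _ _) hy0
              _ ≤ BF * (Bg * Bξ * ‖eb s‖) := by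
                  apply mul_le_mul hBF _ (by positivity) hBF0.le
                  apply mul_le_mul_of_nonneg_right _ hy0
                  exact mul_le_mul hgs (hξbd s hs) (norm_nonneg _) hBg0.le
        _ = d*Bξ*(‖P s‖*‖eb s‖) := by rw [hddef]; ring
    have habs3 : |inner (𝕜 := ℝ) (P s) (F * (g s * De s))| ≤ c₄*(‖P s‖*‖P s‖) := by
      calc |inner (𝕜 := ℝ) (P s) (F * (g s * De s))|
          ≤ ‖P s‖ * ‖F * (g s * De s)‖ := abs_real_inner_le_norm _ _
        _ ≤ ‖P s‖ * (BF * (Bg * (kI * (Bg * (BF * ‖P s‖))))) := by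
            apply mul_le_mul_of_nonneg_left _ hx0
            calc ‖F * (g s * De s)‖ ≤ ‖F‖ * ‖g s * De s‖ := Matrix.frobenius_norm_mul _ _
              _ ≤ ‖F‖ * (‖g s‖ * ‖De s‖) :=
                  mul_le_mul_of_nonneg_left (Matrix.frobenius_norm_mul _ _) (norm_nonneg _)
              _ ≤ BF * (Bg * (kI * (Bg * (BF * ‖P s‖)))) := by
                  apply mul_le_mul hBF _ (by positivity) hBF0.le
                  exact mul_le_mul hgs hDe_bd (norm_nonneg _) hBg0.le
        _ = c₄*(‖P s‖*‖P s‖) := by rw [hc₄def]; ring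
    have habs4 : |inner (𝕜 := ℝ) (P s * ξm s) (q s)| ≤ m*d*(‖P s‖*‖eb s‖) := by
      calc |inner (𝕜 := ℝ) (P s * ξm s) (q s)| ≤ ‖P s * ξm s‖ * ‖q s‖ :=
            abs_real_inner_le_norm _ _
        _ ≤ (‖P s‖ * m) * (d * ‖eb s‖) :=
            mul_le_mul hPxm (hq_up s hs) (norm_nonneg _) (mul_nonneg hx0 hm0.le)
        _ = m*d*(‖P s‖*‖eb s‖) := by ring
    have hq_low : c₀*(‖eb s‖*‖eb s‖) ≤ ‖q s‖^2 := by
      have h1 : Lg * ‖eb s‖ ≤ ‖g s * eb s‖ := by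
        have hσ1 := (hσ s hs).1
        calc Lg * ‖eb s‖ ≤ sigmaMin (g s) * ‖eb s‖ := mul_le_mul_of_nonneg_right hσ1 hy0
          _ ≤ ‖g s * eb s‖ := sigmaMin_mul_le hn _ _
      have h2 : ‖g s * eb s‖ ≤ BI * ‖q s‖ := by
        have he : g s * eb s = F⁻¹ * q s := by
          have hqs : q s = F * (g s * eb s) := by simp only [hqdef]
          rw [hqs, l1]
        rw [he]
        calc ‖F⁻¹ * q s‖ ≤ ‖F⁻¹‖ * ‖q s‖ := Matrix.frobenius_norm_mul _ _
          _ ≤ BI * ‖q s‖ := mul_le_mul_of_nonneg_right hBI (norm_nonneg _)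
      have h3 : Lg * ‖eb s‖ ≤ BI * ‖q s‖ := h1.trans h2
      have h4 : (Lg * ‖eb s‖)^2 ≤ (BI * ‖q s‖)^2 :=
        pow_le_pow_left₀ (mul_nonneg hLg.le hy0) h3 2
      rw [hc₀def, div_pow, div_mul_eq_mul_div, div_le_iff₀ (pow_pos hBI0 2)]
      linarith [h4]
    -- assemble the derivative bound
    have f2u : ε * inner (𝕜 := ℝ) (P s) (F * ((g s * ξ s) * eb s))
        ≤ ε * (d*Bξ*(‖P s‖*‖eb s‖)) :=
      mul_le_mul_of_nonneg_left (abs_le.mp habs2).2 hε0.le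
    have f3u : ε * inner (𝕜 := ℝ) (P s) (F * (g s * De s)) ≤ ε * (c₄*(‖P s‖*‖P s‖)) :=
      mul_le_mul_of_nonneg_left (abs_le.mp habs3).2 hε0.le
    have f4u : ε * inner (𝕜 := ℝ) (P s * ξm s) (q s) ≤ ε * (m*d*(‖P s‖*‖eb s‖)) :=
      mul_le_mul_of_nonneg_left (abs_le.mp habs4).2 hε0.le
    have f5l : (ε*kP) * (-(d*(‖P s‖*‖eb s‖))) ≤ (ε*kP) * inner (𝕜 := ℝ) (P s) (q s) :=
      mul_le_mul_of_nonneg_left (abs_le.mp (habs5 s hs)).1 (mul_nonneg hε0.le hkP0.le)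
    have fql : ε * (c₀*(‖eb s‖*‖eb s‖)) ≤ ε * (‖q s‖^2) :=
      mul_le_mul_of_nonneg_left hq_low hε0.le
    have hconv : ε*(d*Bξ*(‖P s‖*‖eb s‖)) + ε*(m*d*(‖P s‖*‖eb s‖))
        + (ε*kP)*(d*(‖P s‖*‖eb s‖)) = ε*(c*(‖P s‖*‖eb s‖)) := by
      rw [hcdef]; ring
    have hyoung : c*(‖P s‖*‖eb s‖) ≤ c^2/(2*c₀)*‖P s‖^2 + c₀/2*‖eb s‖^2 := young_gen hc₀0
    have h2y : ε*(c*(‖P s‖*‖eb s‖)) ≤ ε*(c^2/(2*c₀)*‖P s‖^2 + c₀/2*‖eb s‖^2) :=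
      mul_le_mul_of_nonneg_left hyoung hε0.le
    have h3y : ε*X*‖P s‖^2 ≤ (α/2)*‖P s‖^2 :=
      mul_le_mul_of_nonneg_right hε1 (sq_nonneg _)
    have hXconv : ε*X*‖P s‖^2 = ε*(c₄*(‖P s‖*‖P s‖)) + ε*(c^2/(2*c₀))*‖P s‖^2 := by
      rw [hXdef]; ring
    have hmain : W' s ≤ -(α/2)*‖P s‖^2 - (ε*c₀/2)*‖eb s‖^2 :=
      main_ineq hWs nb1 f2u f3u f4u f5l fql hconv h2y h3y hXconv hαdef
    -- compare with -2a * W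
    have hub2 : (2*a)*W s ≤ (2*a)*(3/4*‖P s‖^2 + 3/4*(1/kI)*‖eb s‖^2) :=
      mul_le_mul_of_nonneg_left (hWub s hs) (by linarith)
    have hax : (3/2)*a*‖P s‖^2 ≤ (α/2)*‖P s‖^2 :=
      mul_le_mul_of_nonneg_right (by linarith [haα]) (sq_nonneg _)
    have haε' : (3/2)*a*(1/kI) ≤ ε*c₀/2 := by
      rw [show (3/2)*a*(1/kI) = 3*a/(2*kI) by ring, div_le_iff₀ (by linarith)]
      linarith [haε]
    have hay : ((3/2)*a*(1/kI))*‖eb s‖^2 ≤ (ε*c₀/2)*‖eb s‖^2 :=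
      mul_le_mul_of_nonneg_right haε' (sq_nonneg _)
    exact cmp_lemma hmain hub2 hax hay
  have hgron := gronwall_scalar hW' hWle
  -- final assembly
  intro t ht
  have hWt := hgron t ht
  have hlow := hWlb t ht
  have hup0 := hWub 0 le_rfl
  have hR0 : 0 < Real.exp (-(a*t)) := Real.exp_pos _
  have hRdef : Real.exp (-(2*a)*t) = Real.exp (-(a*t)) * Real.exp (-(a*t)) := by
    rw [← Real.exp_add]; ring_nf
  have hE_le : ‖Eg t‖ ≤ BI * ‖P t‖ := by
    have h1 : Eg t = F⁻¹ * P t := by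
      have h0 : P t = F * Eg t := by simp only [hPdef]
      rw [h0, l1]
    rw [h1]
    calc ‖F⁻¹ * P t‖ ≤ ‖F⁻¹‖ * ‖P t‖ := Matrix.frobenius_norm_mul _ _
      _ ≤ BI * ‖P t‖ := mul_le_mul_of_nonneg_right hBI (norm_nonneg _)
  have hP0 : ‖P 0‖ ≤ BF * ‖Eg 0‖ := by
    have h1 : P 0 = F * Eg 0 := by simp only [hPdef]
    rw [h1]
    calc ‖F * Eg 0‖ ≤ ‖F‖ * ‖Eg 0‖ := Matrix.frobenius_norm_mul _ _
      _ ≤ BF * ‖Eg 0‖ := mul_le_mul_of_nonneg_right hBF (norm_nonneg _)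
  have hXsq : ‖Eg t‖^2 ≤ BI^2*‖P t‖^2 := by
    have h := pow_le_pow_left₀ (norm_nonneg (Eg t)) hE_le 2
    rwa [mul_pow] at h
  have hX0sq : ‖P 0‖^2 ≤ BF^2*‖Eg 0‖^2 := by
    have h := pow_le_pow_left₀ (norm_nonneg (P 0)) hP0 2
    rwa [mul_pow] at h
  have hM1P : BI^2*‖P t‖^2 ≤ M1*‖P t‖^2 := mul_le_mul_of_nonneg_right hM1BI (sq_nonneg _)
  have hMk : 1 ≤ M1*(1/kI) := by
    rw [mul_one_div, le_div_iff₀ hkI, one_mul]; exact hM1kI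
  have hYsq : ‖eb t‖^2 ≤ M1*(1/kI)*‖eb t‖^2 := by
    have h := mul_le_mul_of_nonneg_right hMk (sq_nonneg (‖eb t‖))
    rwa [one_mul] at h
  have h4M1 : (0:ℝ) ≤ 4*M1 := by linarith
  have hlow4 : M1*‖P t‖^2 + M1*(1/kI)*‖eb t‖^2 ≤ 4*M1*(W t) := by
    have h := mul_le_mul_of_nonneg_left hlow h4M1
    linarith [h]
  have e1 : ‖Eg t‖^2 + ‖eb t‖^2 ≤ 4*M1*(W t) := e1_lemma hXsq hM1P hYsq hlow4
  have e2 : W t ≤ W 0 * (Real.exp (-(a*t)) * Real.exp (-(a*t))) := by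
    rw [← hRdef]; exact hWt
  have hM2e : BF^2*‖Eg 0‖^2 ≤ M2*‖Eg 0‖^2 := mul_le_mul_of_nonneg_right hM2BF (sq_nonneg _)
  have hM2y : (1/kI)*‖eb 0‖^2 ≤ M2*‖eb 0‖^2 := mul_le_mul_of_nonneg_right hM2k (sq_nonneg _)
  have e3 : W 0 ≤ 3/4*M2*(‖Eg 0‖^2 + ‖eb 0‖^2) := e3_lemma hup0 hX0sq hM2e hM2y
  have e4 : W 0 * (Real.exp (-(a*t)) * Real.exp (-(a*t)))
      ≤ (3/4*M2*(‖Eg 0‖^2 + ‖eb 0‖^2)) * (Real.exp (-(a*t)) * Real.exp (-(a*t))) :=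
    mul_le_mul_of_nonneg_right e3 (mul_nonneg hR0.le hR0.le)
  have e4' : 4*M1*(W 0 * (Real.exp (-(a*t)) * Real.exp (-(a*t))))
      ≤ 4*M1*((3/4*M2*(‖Eg 0‖^2 + ‖eb 0‖^2)) * (Real.exp (-(a*t)) * Real.exp (-(a*t)))) :=
    mul_le_mul_of_nonneg_left e4 h4M1
  have e5 : 4*M1*(W t) ≤ 4*M1*(W 0 * (Real.exp (-(a*t)) * Real.exp (-(a*t)))) :=
    mul_le_mul_of_nonneg_left e2 h4M1
  have hC₁conv : 4*M1*((3/4*M2*(‖Eg 0‖^2 + ‖eb 0‖^2)) * (Real.exp (-(a*t)) * Real.exp (-(a*t))))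
      = C₁*(‖Eg 0‖^2 + ‖eb 0‖^2)*(Real.exp (-(a*t)) * Real.exp (-(a*t))) := by
    rw [hC₁def]; ring
  have p1 : (‖Eg t‖+‖eb t‖)^2 ≤ 2*(‖Eg t‖^2+‖eb t‖^2) := aux_sq1 _ _
  have p2 : ‖Eg 0‖^2+‖eb 0‖^2 ≤ (‖Eg 0‖+‖eb 0‖)^2 :=
    aux_sq2 (norm_nonneg _) (norm_nonneg _)
  have p3 : C₁*(‖Eg 0‖^2 + ‖eb 0‖^2)*(Real.exp (-(a*t)) * Real.exp (-(a*t)))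
      ≤ C₁*((‖Eg 0‖+‖eb 0‖)^2)*(Real.exp (-(a*t)) * Real.exp (-(a*t))) :=
    mul_le_mul_of_nonneg_right (mul_le_mul_of_nonneg_left p2 hC₁0.le)
      (mul_nonneg hR0.le hR0.le)
  have hRHS2 : (C*((‖Eg 0‖+‖eb 0‖))*Real.exp (-(a*t)))^2
      = 2*(C₁*((‖Eg 0‖+‖eb 0‖)^2)*(Real.exp (-(a*t)) * Real.exp (-(a*t)))) := by
    rw [mul_pow, mul_pow, hC2]; ring
  have key2 : (‖Eg t‖+‖eb t‖)^2 ≤ (C*((‖Eg 0‖+‖eb 0‖))*Real.exp (-(a*t)))^2 :=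
    chain_lemma p1 e1 e5 e4' hC₁conv p3 hRHS2
  have hLHS0 : (0:ℝ) ≤ ‖Eg t‖+‖eb t‖ := add_nonneg (norm_nonneg _) (norm_nonneg _)
  have hRHS0 : (0:ℝ) ≤ C*((‖Eg 0‖+‖eb 0‖))*Real.exp (-(a*t)) :=
    mul_nonneg (mul_nonneg hC0.le (add_nonneg (norm_nonneg _) (norm_nonneg _))) hR0.le
  have hfinal : ‖Eg t‖+‖eb t‖ ≤ C*((‖Eg 0‖+‖eb 0‖))*Real.exp (-(a*t)) :=
    aux_le_of_sq hLHS0 hRHS0 key2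
  have c1 : g t - F⁻¹ * Abar t = Eg t := by simp only [hEgdef]
  have c2 : b - bbar t = eb t := by simp only [hebdef]
  have c3 : g 0 - F⁻¹ * Abar 0 = Eg 0 := by simp only [hEgdef]
  have c4 : b - bbar 0 = eb 0 := by simp only [hebdef]
  rw [c1, c2, c3, c4]
  calc ‖Eg t‖ + ‖eb t‖ ≤ C*((‖Eg 0‖+‖eb 0‖))*Real.exp (-(a*t)) := hfinal
    _ = C * (‖Eg 0‖ + ‖eb 0‖) * Real.exp (-(a * t)) := by ring
end

section
/- Suppose A(t) = F g(t) for all t ≥ 0, and fix gains k_P > B_ξ + B_b and k_I > 0. Consider the modified observer in which the bias estimate is unconstrained: for every differentiable solution (Ā, b̄) : [0,∞) → ℝ^{n×n} × ℝ^{n×n} of Ā'(t) = Ā(t) ξ_m(t) − A(t) b̄(t) + k_P (A(t) − Ā(t)) and b̄'(t) = −k_I A(t)ᵀ (A(t) − Ā(t)), there exist constants a > 0 and C > 0, independent of the initial condition (Ā(0), b̄(0)) ∈ ℝ^{n×n} × ℝ^{n×n}, such that the errors E_A(t) = A(t) − Ā(t) and e_b(t) = b − b̄(t) satisfy ‖E_A(t)‖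 + ‖e_b(t)‖ ≤ C (‖E_A(0)‖ + ‖e_b(0)‖) e^{−a t} for all t ≥ 0. -/
open Matrix

attribute [local instance] Matrix.frobeniusNormedAddCommGroup Matrix.frobeniusNormedSpace

attribute [local instance 100] LieRing.ofAssociativeRing

section GESAux

attribute [local instance] Matrix.frobeniusNormedRing Matrix.frobeniusNormedAlgebra

/-- The Frobenius norm comes from an inner product. -/
@[reducible]
noncomputable def matIPS_s7 {n : ℕ} : InnerProductSpace ℝ (Matrix (Fin n) (Fin n) ℝ) :=
  { inner := fun X Y => ∑ i, ∑ j, X i j * Y i j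
    norm_sq_eq_re_inner := fun X => by
      rw [Matrix.frobenius_norm_def, ← Real.rpow_natCast, ← Real.rpow_mul (by positivity)]
      norm_num
      refine Finset.sum_congr rfl fun i _ => Finset.sum_congr rfl fun j _ => ?_
      exact sq _
    conj_inner_symm := fun X Y => by
      simp only [conj_trivial]
      exact Finset.sum_congr rfl fun i _ => Finset.sum_congr rfl fun j _ => mul_comm _ _
    add_left := fun X Y Z => by
      simp only [Matrix.add_apply, add_mul, Finset.sum_add_distrib]
    smul_left := fun X Y r => by
      simp only [Matrix.smul_apply, smul_eq_mul, conj_trivial, Finset.mul_sum, mul_assoc] }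

attribute [local instance] matIPS_s7

lemma mat_inner_eq {n : ℕ} (X Y : Matrix (Fin n) (Fin n) ℝ) :
    inner (𝕜 := ℝ) X Y = ∑ i, ∑ j, X i j * Y i j := by
  simp [inner, RCLike.inner_apply]

lemma mat_inner_eq_trace {n : ℕ} (X Y : Matrix (Fin n) (Fin n) ℝ) :
    inner (𝕜 := ℝ) X Y = (Xᵀ * Y).trace := by
  rw [mat_inner_eq, Matrix.trace, Finset.sum_comm]
  simp [Matrix.diag, Matrix.mul_apply]

lemma mat_inner_transpose {n : ℕ} (M X Y : Matrix (Fin n) (Fin n) ℝ) :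
    inner (𝕜 := ℝ) X (M * Y) = inner (𝕜 := ℝ) (Mᵀ * X) Y := by
  rw [mat_inner_eq_trace, mat_inner_eq_trace, Matrix.transpose_mul,
    Matrix.transpose_transpose, Matrix.mul_assoc]

lemma mat_norm_sq {n : ℕ} (X : Matrix (Fin n) (Fin n) ℝ) :
    ‖X‖^2 = ∑ i, ∑ j, (X i j)^2 := by
  rw [← real_inner_self_eq_norm_sq]
  simp only [mat_inner_eq, sq]

lemma euc_norm_sq {n : ℕ} (x : EuclideanSpace ℝ (Fin n)) : ‖x‖^2 = ∑ i, (x i)^2 := by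
  rw [EuclideanSpace.norm_eq, Real.sq_sqrt (by positivity)]
  exact Finset.sum_congr rfl fun i _ => by rw [Real.norm_eq_abs, sq_abs]

/-- lower bound transfer from Euclidean action to Frobenius norm. -/
lemma col_lower {n : ℕ} (M : Matrix (Fin n) (Fin n) ℝ) (c : ℝ) (hc : 0 ≤ c)
    (h : ∀ v : EuclideanSpace ℝ (Fin n), c * ‖v‖ ≤ ‖(Matrix.toEuclideanCLM (𝕜 := ℝ) M) v‖)
    (X : Matrix (Fin n) (Fin n) ℝ) : c * ‖X‖ ≤ ‖M * X‖ := by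
  have hsq : (c * ‖X‖)^2 ≤ ‖M * X‖^2 := by
    have hcol : ∀ j : Fin n, (c * ‖(WithLp.equiv 2 (Fin n → ℝ)).symm (fun i => X i j)‖)^2
        ≤ ∑ i, ((M * X) i j)^2 := by
      intro j
      have h1 := h ((WithLp.equiv 2 (Fin n → ℝ)).symm (fun i => X i j))
      have h2 := pow_le_pow_left₀ (by positivity) h1 2
      refine h2.trans_eq ?_
      rw [euc_norm_sq]
      refine Finset.sum_congr rfl fun i _ => ?_
      congr 1
    calc (c * ‖X‖)^2 = ∑ j, (c * ‖(WithLp.equiv 2 (Fin n → ℝ)).symm (fun i => X i j)‖)^2 := by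
          simp only [mul_pow]
          rw [mat_norm_sq, Finset.sum_comm, Finset.mul_sum]
          refine Finset.sum_congr rfl fun j _ => ?_
          rw [euc_norm_sq]
          rfl
      _ ≤ ∑ j, ∑ i, ((M * X) i j)^2 := Finset.sum_le_sum fun j _ => hcol j
      _ = ‖M * X‖^2 := by rw [mat_norm_sq, Finset.sum_comm]
  have h3 := Real.sqrt_le_sqrt hsq
  rwa [Real.sqrt_sq (by positivity), Real.sqrt_sq (norm_nonneg _)] at h3

/-- Frobenius norm bounded via uniform Euclidean action bound. -/
lemma frob_upper {n : ℕ} (M : Matrix (Fin n) (Fin n) ℝ) (u : ℝ) (hu : 0 ≤ u)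
    (h : ∀ v : EuclideanSpace ℝ (Fin n), ‖(Matrix.toEuclideanCLM (𝕜 := ℝ) M) v‖ ≤ u * ‖v‖) :
    ‖M‖ ≤ Real.sqrt n * u := by
  have hsq : ‖M‖^2 ≤ n * u^2 := by
    have hcol : ∀ j : Fin n, ∑ i, (M i j)^2 ≤ u^2 := by
      intro j
      have h1 := h (EuclideanSpace.single j 1)
      have h2 := pow_le_pow_left₀ (norm_nonneg _) h1 2
      rw [euc_norm_sq] at h2
      calc ∑ i, (M i j)^2
          = ∑ i, ((Matrix.toEuclideanCLM (𝕜 := ℝ) M) (EuclideanSpace.single j 1) i)^2 := by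
            refine Finset.sum_congr rfl fun i _ => ?_
            congr 1
            show M i j = M.mulVec (Pi.single j 1) i
            rw [Matrix.mulVec_single]; exact (mul_one _).symm
        _ ≤ (u * ‖EuclideanSpace.single j (1:ℝ)‖)^2 := h2
        _ = u^2 := by rw [EuclideanSpace.norm_single, norm_one, mul_one]
    calc ‖M‖^2 = ∑ i, ∑ j, (M i j)^2 := mat_norm_sq M
      _ = ∑ j, ∑ i, (M i j)^2 := Finset.sum_comm
      _ ≤ ∑ _j : Fin n, u^2 := Finset.sum_le_sum fun j _ => hcol j
      _ = n * u^2 := by rw [Finset.sum_const]; simp [mul_comm]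
  have h3 := Real.sqrt_le_sqrt hsq
  rwa [Real.sqrt_sq (norm_nonneg _), show (n : ℝ) * u^2 = (Real.sqrt n * u)^2 by
    rw [mul_pow, Real.sq_sqrt (by positivity)], Real.sqrt_sq (by positivity)] at h3

lemma sigmaMin_le_vec {n : ℕ} (M : Matrix (Fin n) (Fin n) ℝ) (v : EuclideanSpace ℝ (Fin n)) :
    sigmaMin M * ‖v‖ ≤ ‖(Matrix.toEuclideanCLM (𝕜 := ℝ) M) v‖ := by
  rcases eq_or_ne v 0 with rfl | hv
  · simp [sigmaMin]
  · have hvn : ‖v‖ ≠ 0 := norm_ne_zero_iff.mpr hv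
    have hmem : ‖(Matrix.toEuclideanCLM (𝕜 := ℝ) M) (‖v‖⁻¹ • v)‖ ∈
        ((fun x : EuclideanSpace ℝ (Fin n) => ‖(Matrix.toEuclideanCLM (𝕜 := ℝ) M) x‖) '' {x | ‖x‖ = 1}) :=
      ⟨_, by simp [norm_smul, abs_of_nonneg, inv_mul_cancel₀ hvn], rfl⟩
    have hbdd : BddBelow ((fun x : EuclideanSpace ℝ (Fin n) => ‖(Matrix.toEuclideanCLM (𝕜 := ℝ) M) x‖) '' {x | ‖x‖ = 1}) :=
      ⟨0, fun y ⟨x, _, hx⟩ => hx ▸ norm_nonneg _⟩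
    have h1 : sigmaMin M ≤ ‖(Matrix.toEuclideanCLM (𝕜 := ℝ) M) (‖v‖⁻¹ • v)‖ := csInf_le hbdd hmem
    rw [_root_.map_smul, norm_smul, Real.norm_eq_abs, abs_inv, abs_of_nonneg (norm_nonneg v)] at h1
    have h2 := mul_le_mul_of_nonneg_right h1 (norm_nonneg v)
    calc sigmaMin M * ‖v‖ ≤ ‖v‖⁻¹ * ‖(Matrix.toEuclideanCLM (𝕜 := ℝ) M) v‖ * ‖v‖ := h2
      _ = ‖(Matrix.toEuclideanCLM (𝕜 := ℝ) M) v‖ := by field_simp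

lemma vec_le_sigmaMax {n : ℕ} (M : Matrix (Fin n) (Fin n) ℝ) (v : EuclideanSpace ℝ (Fin n)) :
    ‖(Matrix.toEuclideanCLM (𝕜 := ℝ) M) v‖ ≤ sigmaMax M * ‖v‖ := by
  rcases eq_or_ne v 0 with rfl | hv
  · simp
  · have hvn : ‖v‖ ≠ 0 := norm_ne_zero_iff.mpr hv
    have hbdd : BddAbove ((fun x : EuclideanSpace ℝ (Fin n) => ‖(Matrix.toEuclideanCLM (𝕜 := ℝ) M) x‖) '' {x | ‖x‖ = 1}) := by
      refine ⟨‖(Matrix.toEuclideanCLM (𝕜 := ℝ) M)‖, fun y ⟨x, hx, hxe⟩ => ?_⟩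
      rw [← hxe]
      calc ‖(Matrix.toEuclideanCLM (𝕜 := ℝ) M) x‖ ≤ ‖(Matrix.toEuclideanCLM (𝕜 := ℝ) M)‖ * ‖x‖ :=
            (Matrix.toEuclideanCLM (𝕜 := ℝ) M).le_opNorm x
        _ = ‖(Matrix.toEuclideanCLM (𝕜 := ℝ) M)‖ := by rw [hx, mul_one]
    have hmem : ‖(Matrix.toEuclideanCLM (𝕜 := ℝ) M) (‖v‖⁻¹ • v)‖ ∈
        ((fun x : EuclideanSpace ℝ (Fin n) => ‖(Matrix.toEuclideanCLM (𝕜 := ℝ) M) x‖) '' {x | ‖x‖ = 1}) :=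
      ⟨_, by simp [norm_smul, abs_of_nonneg, inv_mul_cancel₀ hvn], rfl⟩
    have h1 : ‖(Matrix.toEuclideanCLM (𝕜 := ℝ) M) (‖v‖⁻¹ • v)‖ ≤ sigmaMax M := le_csSup hbdd hmem
    rw [_root_.map_smul, norm_smul, Real.norm_eq_abs, abs_inv, abs_of_nonneg (norm_nonneg v)] at h1
    have h2 := mul_le_mul_of_nonneg_right h1 (norm_nonneg v)
    calc ‖(Matrix.toEuclideanCLM (𝕜 := ℝ) M) v‖
        = ‖v‖⁻¹ * ‖(Matrix.toEuclideanCLM (𝕜 := ℝ) M) v‖ * ‖v‖ := by field_simp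
      _ ≤ sigmaMax M * ‖v‖ := h2

/-- An invertible matrix has a positive lower bound on its Euclidean action. -/
lemma unit_lower {n : ℕ} (F : Matrix (Fin n) (Fin n) ℝ) (hF : IsUnit F) :
    ∃ cF > (0:ℝ), ∀ v : EuclideanSpace ℝ (Fin n),
      cF * ‖v‖ ≤ ‖(Matrix.toEuclideanCLM (𝕜 := ℝ) F) v‖ := by
  set T := Matrix.toEuclideanCLM (𝕜 := ℝ) F⁻¹
  refine ⟨(1 + ‖T‖)⁻¹, by positivity, fun v => ?_⟩
  have hinv : F⁻¹ * F = 1 := Matrix.nonsing_inv_mul F ((Matrix.isUnit_iff_isUnit_det F).mp hF)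
  have hv : ‖v‖ ≤ ‖T‖ * ‖(Matrix.toEuclideanCLM (𝕜 := ℝ) F) v‖ := by
    have h1 : v = T ((Matrix.toEuclideanCLM (𝕜 := ℝ) F) v) := by
      have h2 : Matrix.toEuclideanCLM (𝕜 := ℝ) (F⁻¹ * F) =
          T * (Matrix.toEuclideanCLM (𝕜 := ℝ) F) := map_mul _ _ _
      rw [hinv] at h2
      calc v = (Matrix.toEuclideanCLM (𝕜 := ℝ) (1 : Matrix (Fin n) (Fin n) ℝ)) v := by
            rw [_root_.map_one]; rfl
        _ = T ((Matrix.toEuclideanCLM (𝕜 := ℝ) F) v) := by rw [h2]; rfl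
    calc ‖v‖ = ‖T ((Matrix.toEuclideanCLM (𝕜 := ℝ) F) v)‖ := by rw [← h1]
      _ ≤ ‖T‖ * ‖(Matrix.toEuclideanCLM (𝕜 := ℝ) F) v‖ := T.le_opNorm _
  have hT : ‖T‖ ≤ 1 + ‖T‖ := by linarith [norm_nonneg T]
  have h3 : ‖v‖ ≤ (1 + ‖T‖) * ‖(Matrix.toEuclideanCLM (𝕜 := ℝ) F) v‖ :=
    hv.trans (mul_le_mul_of_nonneg_right hT (norm_nonneg _))
  rw [inv_mul_le_iff₀ (by positivity)]
  linarith

end GESAux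
section GESCore

attribute [local instance] Matrix.frobeniusNormedRing Matrix.frobeniusNormedAlgebra matIPS_s7

local notation "⟪" x ", " y "⟫" => inner (𝕜 := ℝ) x y

lemma amgm_div {p c x y : ℝ} (hc : 0 < c) (hx : 0 ≤ x) (hy : 0 ≤ y) :
    p * (x * y) ≤ p ^ 2 / c ^ 2 * x ^ 2 + c ^ 2 / 4 * y ^ 2 := by
  have h1 : p * (x * y) = (p / c * x) * (c * y) := by field_simp
  have h2 : (p / c * x) * (c * y) ≤ (p / c * x) ^ 2 + (c * y / 2) ^ 2 := by
    nlinarith [sq_nonneg (p / c * x - c * y / 2)]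
  have h3 : (p / c * x) ^ 2 = p ^ 2 / c ^ 2 * x ^ 2 := by field_simp
  have h4 : (c * y / 2) ^ 2 = c ^ 2 / 4 * y ^ 2 := by ring
  linarith [h1 ▸ h2, h3 ▸ h4 ▸ le_refl ((p / c * x) ^ 2 + (c * y / 2) ^ 2)]

lemma key_scalar {δ ε a c β K1 K2 x y : ℝ}
    (hδ : 0 < δ) (hε : 0 < ε) (ha : 0 < a) (hc : 0 < c) (hβ : 0 < β)
    (hx : 0 ≤ x) (hy : 0 ≤ y)
    (hq1 : ε * (K1 ^ 2 / c ^ 2 + K2) ≤ δ / 2)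
    (hq4 : 2 * a ≤ δ / 2)
    (hq5 : 4 * a * β ≤ 3 / 4 * (ε * c ^ 2)) :
    -δ * x ^ 2 + ε * (K1 * (x * y) + K2 * x ^ 2 - c ^ 2 * y ^ 2)
      + 2 * a * (x ^ 2 + 2 * β * y ^ 2) ≤ 0 := by
  have hAM := amgm_div (p := K1) hc hx hy
  have h1 : K1 * (x * y) + K2 * x ^ 2 - c ^ 2 * y ^ 2
      ≤ (K1 ^ 2 / c ^ 2 + K2) * x ^ 2 - 3 / 4 * c ^ 2 * y ^ 2 := by linarith
  have h2 := mul_le_mul_of_nonneg_left h1 hε.le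
  have h3 : ε * ((K1 ^ 2 / c ^ 2 + K2) * x ^ 2 - 3 / 4 * c ^ 2 * y ^ 2)
      = (ε * (K1 ^ 2 / c ^ 2 + K2)) * x ^ 2 - 3 / 4 * (ε * c ^ 2) * y ^ 2 := by ring
  have h4 : (ε * (K1 ^ 2 / c ^ 2 + K2)) * x ^ 2 ≤ (δ / 2) * x ^ 2 :=
    mul_le_mul_of_nonneg_right hq1 (sq_nonneg x)
  have h5 : (2 * a) * x ^ 2 ≤ (δ / 2) * x ^ 2 :=
    mul_le_mul_of_nonneg_right hq4 (sq_nonneg x)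
  have h6 : (4 * a * β) * y ^ 2 ≤ (3 / 4 * (ε * c ^ 2)) * y ^ 2 :=
    mul_le_mul_of_nonneg_right hq5 (sq_nonneg y)
  nlinarith [h2, h3, h4, h5, h6]

noncomputable def lyapW {n : ℕ} (β ε : ℝ) (Aa E e : ℝ → Matrix (Fin n) (Fin n) ℝ) : ℝ → ℝ :=
  fun t => 1/2 * ⟪E t, E t⟫ + β * ⟪e t, e t⟫ + ε * ⟪E t, Aa t * e t⟫

noncomputable def lyapD {n : ℕ} (β ε kP kI : ℝ)
    (Aa dA E e ξm : ℝ → Matrix (Fin n) (Fin n) ℝ) : ℝ → ℝ :=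
  fun t =>
    1/2 * (⟪E t, E t * ξm t - Aa t * e t - kP • E t⟫ + ⟪E t * ξm t - Aa t * e t - kP • E t, E t⟫)
    + β * (⟪e t, kI • ((Aa t)ᵀ * E t)⟫ + ⟪kI • ((Aa t)ᵀ * E t), e t⟫)
    + ε * (⟪E t, dA t * e t + Aa t * (kI • ((Aa t)ᵀ * E t))⟫
        + ⟪E t * ξm t - Aa t * e t - kP • E t, Aa t * e t⟫)

set_option maxHeartbeats 1000000 in
lemma lyapW_hasDerivAt {n : ℕ} (β ε kP kI : ℝ)
    (Aa dA E e ξm : ℝ → Matrix (Fin n) (Fin n) ℝ) (t : ℝ)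
    (hdA : HasDerivAt Aa (dA t) t)
    (hE : HasDerivAt E (E t * ξm t - Aa t * e t - kP • E t) t)
    (he : HasDerivAt e (kI • ((Aa t)ᵀ * E t)) t) :
    HasDerivAt (lyapW β ε Aa E e) (lyapD β ε kP kI Aa dA E e ξm t) t := by
  exact (((hE.inner ℝ hE).const_mul (1/2)).add
      ((he.inner ℝ he).const_mul β)).add
      ((hE.inner ℝ (hdA.mul he)).const_mul ε)

set_option maxHeartbeats 1000000 in
lemma lyapD_eq {n : ℕ} (β ε kP kI : ℝ) (hkI : 0 < kI) (hβeq : β = 1 / (2 * kI))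
    (Aa dA E e ξm : ℝ → Matrix (Fin n) (Fin n) ℝ) (t : ℝ) :
    lyapD β ε kP kI Aa dA E e ξm t = ⟪E t, E t * ξm t⟫ - kP * ‖E t‖ ^ 2
      + ε * (⟪E t, dA t * e t⟫ + kI * ‖(Aa t)ᵀ * E t‖ ^ 2 + ⟪E t * ξm t, Aa t * e t⟫
        - ‖Aa t * e t‖ ^ 2 - kP * ⟪E t, Aa t * e t⟫) := by
  have hbk : β * kI = 1/2 := by rw [hβeq]; field_simp
  have e1 : ⟪E t, E t * ξm t - Aa t * e t - kP • E t⟫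
      = ⟪E t, E t * ξm t⟫ - ⟪E t, Aa t * e t⟫ - kP * ‖E t‖ ^ 2 := by
    simp only [inner_sub_right, real_inner_smul_right, real_inner_self_eq_norm_sq]
  have e3 : ⟪e t, kI • ((Aa t)ᵀ * E t)⟫ = kI * ⟪E t, Aa t * e t⟫ := by
    simp only [real_inner_smul_right]
    congr 1
    rw [real_inner_comm]
    exact (mat_inner_transpose _ _ _).symm
  have e5 : ⟪E t, dA t * e t + Aa t * (kI • ((Aa t)ᵀ * E t))⟫
      = ⟪E t, dA t * e t⟫ + kI * ‖(Aa t)ᵀ * E t‖ ^ 2 := by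
    rw [inner_add_right]
    congr 1
    simp only [mul_smul_comm, real_inner_smul_right]
    congr 1
    rw [mat_inner_transpose, real_inner_self_eq_norm_sq]
  have e6 : ⟪E t * ξm t - Aa t * e t - kP • E t, Aa t * e t⟫
      = ⟪E t * ξm t, Aa t * e t⟫ - ‖Aa t * e t‖ ^ 2 - kP * ⟪E t, Aa t * e t⟫ := by
    simp only [inner_sub_left, real_inner_smul_left, real_inner_self_eq_norm_sq]
  have e2 : ⟪E t * ξm t - Aa t * e t - kP • E t, E t⟫
      = ⟪E t, E t * ξm t - Aa t * e t - kP • E t⟫ := real_inner_comm _ _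
  have e4 : ⟪kI • ((Aa t)ᵀ * E t), e t⟫ = ⟪e t, kI • ((Aa t)ᵀ * E t)⟫ := real_inner_comm _ _
  rw [lyapD, e2, e1, e4, e3, e5, e6]
  linear_combination (2 * ⟪E t, Aa t * e t⟫) * hbk

set_option maxHeartbeats 1000000 in
lemma lyapW_comp {n : ℕ} (β ε U : ℝ) (hβ : 0 < β) (hε : 0 < ε) (hU : 0 < U)
    (hq2 : ε * U ≤ 1 / 2) (hq3 : ε * U ≤ β / 2)
    (Aa E e : ℝ → Matrix (Fin n) (Fin n) ℝ) (t : ℝ)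
    (hAup : ‖Aa t‖ ≤ U) :
    1/4 * ‖E t‖ ^ 2 + β / 2 * ‖e t‖ ^ 2 ≤ lyapW β ε Aa E e t ∧
    lyapW β ε Aa E e t ≤ ‖E t‖ ^ 2 + 2 * β * ‖e t‖ ^ 2 := by
  have hWt : lyapW β ε Aa E e t
      = 1/2 * ‖E t‖ ^ 2 + β * ‖e t‖ ^ 2 + ε * ⟪E t, Aa t * e t⟫ := by
    rw [lyapW]
    simp only [real_inner_self_eq_norm_sq]
  have hI2 : |⟪E t, Aa t * e t⟫| ≤ U * (‖E t‖ * ‖e t‖) := by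
    calc |⟪E t, Aa t * e t⟫| ≤ ‖E t‖ * ‖Aa t * e t‖ := abs_real_inner_le_norm _ _
      _ ≤ ‖E t‖ * (U * ‖e t‖) := by
          refine mul_le_mul_of_nonneg_left ?_ (norm_nonneg _)
          exact (norm_mul_le _ _).trans
            (mul_le_mul_of_nonneg_right hAup (norm_nonneg _))
      _ = U * (‖E t‖ * ‖e t‖) := by ring
  have hxy : ‖E t‖ * ‖e t‖ ≤ (‖E t‖ ^ 2 + ‖e t‖ ^ 2) / 2 := by
    nlinarith [sq_nonneg (‖E t‖ - ‖e t‖)]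
  have hub : ε * ⟪E t, Aa t * e t⟫ ≤ (ε * U) * ((‖E t‖ ^ 2 + ‖e t‖ ^ 2) / 2) := by
    have h1 := le_abs_self (⟪E t, Aa t * e t⟫)
    have h2 := mul_le_mul_of_nonneg_left hxy (by positivity : (0:ℝ) ≤ ε * U)
    nlinarith [abs_nonneg (⟪E t, Aa t * e t⟫)]
  have hlb : -((ε * U) * ((‖E t‖ ^ 2 + ‖e t‖ ^ 2) / 2)) ≤ ε * ⟪E t, Aa t * e t⟫ := by
    have h1 := neg_abs_le (⟪E t, Aa t * e t⟫)
    have h2 := mul_le_mul_of_nonneg_left hxy (by positivity : (0:ℝ) ≤ ε * U)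
    nlinarith [abs_nonneg (⟪E t, Aa t * e t⟫)]
  constructor
  · rw [hWt]
    nlinarith [sq_nonneg ‖E t‖, sq_nonneg ‖e t‖, hq2, hq3]
  · rw [hWt]
    nlinarith [sq_nonneg ‖E t‖, sq_nonneg ‖e t‖, hq2, hq3]

set_option maxHeartbeats 4000000 in
lemma lyap_key {n : ℕ} (kP kI Bm c U ε a β : ℝ)
    (hBm : 0 < Bm) (hc : 0 < c) (hU : 0 < U) (hkI : 0 < kI) (hkP : Bm < kP)
    (hε : 0 < ε) (ha : 0 < a) (hβeq : β = 1 / (2 * kI))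
    (hq1 : ε * ((U * (2 * Bm + kP)) ^ 2 / c ^ 2 + kI * U ^ 2) ≤ (kP - Bm) / 2)
    (hq2 : ε * U ≤ 1 / 2) (hq3 : ε * U ≤ β / 2)
    (hq4 : 2 * a ≤ (kP - Bm) / 2)
    (hq5 : 4 * a * β ≤ 3 / 4 * (ε * c ^ 2))
    (Aa dA E e ξm : ℝ → Matrix (Fin n) (Fin n) ℝ) (t : ℝ)
    (hξmbd : ‖ξm t‖ ≤ Bm) (hAup : ‖Aa t‖ ≤ U)
    (hAlow : c * ‖e t‖ ≤ ‖Aa t * e t‖) (hdAbd : ‖dA t‖ ≤ U * Bm) :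
    lyapD β ε kP kI Aa dA E e ξm t + 2 * a * lyapW β ε Aa E e t ≤ 0 := by
  have hβ : 0 < β := by rw [hβeq]; positivity
  have hδ : 0 < kP - Bm := by linarith
  have hkP0 : 0 < kP := lt_trans hBm hkP
  have hx : (0:ℝ) ≤ ‖E t‖ := norm_nonneg _
  have hy : (0:ℝ) ≤ ‖e t‖ := norm_nonneg _
  have hnEξ : ‖E t * ξm t‖ ≤ Bm * ‖E t‖ := by
    calc ‖E t * ξm t‖ ≤ ‖E t‖ * ‖ξm t‖ := norm_mul_le _ _
      _ ≤ ‖E t‖ * Bm := mul_le_mul_of_nonneg_left hξmbd (norm_nonneg _)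
      _ = Bm * ‖E t‖ := mul_comm _ _
  have hnAe : ‖Aa t * e t‖ ≤ U * ‖e t‖ := by
    calc ‖Aa t * e t‖ ≤ ‖Aa t‖ * ‖e t‖ := norm_mul_le _ _
      _ ≤ U * ‖e t‖ := mul_le_mul_of_nonneg_right hAup (norm_nonneg _)
  have hnATE : ‖(Aa t)ᵀ * E t‖ ≤ U * ‖E t‖ := by
    calc ‖(Aa t)ᵀ * E t‖ ≤ ‖(Aa t)ᵀ‖ * ‖E t‖ := norm_mul_le _ _
      _ ≤ U * ‖E t‖ := by
          rw [Matrix.frobenius_norm_transpose]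
          exact mul_le_mul_of_nonneg_right hAup (norm_nonneg _)
  have hnAd : ‖dA t * e t‖ ≤ U * Bm * ‖e t‖ := by
    calc ‖dA t * e t‖ ≤ ‖dA t‖ * ‖e t‖ := norm_mul_le _ _
      _ ≤ U * Bm * ‖e t‖ := mul_le_mul_of_nonneg_right hdAbd (norm_nonneg _)
  have hb1 : ⟪E t, E t * ξm t⟫ ≤ Bm * ‖E t‖ ^ 2 := by
    have := real_inner_le_norm (E t) (E t * ξm t)
    nlinarith
  have hb2 : kI * ‖(Aa t)ᵀ * E t‖ ^ 2 ≤ kI * (U ^ 2 * ‖E t‖ ^ 2) := by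
    have h1 : ‖(Aa t)ᵀ * E t‖ ^ 2 ≤ (U * ‖E t‖) ^ 2 :=
      pow_le_pow_left₀ (norm_nonneg _) hnATE 2
    nlinarith [hkI.le]
  have hb3 : ⟪E t, dA t * e t⟫ ≤ U * Bm * (‖E t‖ * ‖e t‖) := by
    have := real_inner_le_norm (E t) (dA t * e t)
    nlinarith [mul_nonneg (mul_nonneg hU.le hBm.le) hy]
  have hb4 : ⟪E t * ξm t, Aa t * e t⟫ ≤ Bm * U * (‖E t‖ * ‖e t‖) := by
    have h1 := real_inner_le_norm (E t * ξm t) (Aa t * e t)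
    have h2 : ‖E t * ξm t‖ * ‖Aa t * e t‖ ≤ (Bm * ‖E t‖) * (U * ‖e t‖) :=
      mul_le_mul hnEξ hnAe (norm_nonneg _) (by positivity)
    nlinarith
  have hb5 : c ^ 2 * ‖e t‖ ^ 2 ≤ ‖Aa t * e t‖ ^ 2 := by
    nlinarith [mul_nonneg hc.le hy, hAlow]
  have hb6 : -(kP * ⟪E t, Aa t * e t⟫) ≤ kP * (U * (‖E t‖ * ‖e t‖)) := by
    have h1 := abs_real_inner_le_norm (E t) (Aa t * e t)
    have h2 := neg_abs_le (⟪E t, Aa t * e t⟫)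
    nlinarith [mul_le_mul_of_nonneg_left hnAe hx]
  have hbr : ⟪E t, dA t * e t⟫ + kI * ‖(Aa t)ᵀ * E t‖ ^ 2 + ⟪E t * ξm t, Aa t * e t⟫
      - ‖Aa t * e t‖ ^ 2 - kP * ⟪E t, Aa t * e t⟫
      ≤ (U * (2 * Bm + kP)) * (‖E t‖ * ‖e t‖) + (kI * U ^ 2) * ‖E t‖ ^ 2
        - c ^ 2 * ‖e t‖ ^ 2 := by nlinarith [hb2, hb3, hb4, hb5, hb6]
  have hDWle : lyapD β ε kP kI Aa dA E e ξm t ≤ -(kP - Bm) * ‖E t‖ ^ 2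
      + ε * ((U * (2 * Bm + kP)) * (‖E t‖ * ‖e t‖) + (kI * U ^ 2) * ‖E t‖ ^ 2
        - c ^ 2 * ‖e t‖ ^ 2) := by
    rw [lyapD_eq β ε kP kI hkI hβeq Aa dA E e ξm t]
    have h1 := mul_le_mul_of_nonneg_left hbr hε.le
    nlinarith [hb1]
  have h2aW : 2 * a * lyapW β ε Aa E e t ≤ 2 * a * (‖E t‖ ^ 2 + 2 * β * ‖e t‖ ^ 2) :=
    mul_le_mul_of_nonneg_left
      (lyapW_comp β ε U hβ hε hU hq2 hq3 Aa E e t hAup).2 (by positivity)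
  have hks := key_scalar (δ := kP - Bm) (K1 := U * (2 * Bm + kP)) (K2 := kI * U ^ 2)
    hδ hε ha hc hβ hx hy hq1 hq4 hq5
  nlinarith [hDWle, h2aW, hks]

set_option maxHeartbeats 1000000 in
/-- Core Lyapunov argument for the observer error system. -/
lemma GES_core {n : ℕ}
    (Aa dA E e ξm : ℝ → Matrix (Fin n) (Fin n) ℝ)
    (kP kI Bm c U ε a β C : ℝ)
    (hBm : 0 < Bm) (hc : 0 < c) (hU : 0 < U) (hkI : 0 < kI) (hkP : Bm < kP)
    (hε : 0 < ε) (ha : 0 < a)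
    (hβeq : β = 1 / (2 * kI))
    (hCeq : C = Real.sqrt ((8 + 4 / β) * (1 + 2 * β)))
    (hq1 : ε * ((U * (2 * Bm + kP)) ^ 2 / c ^ 2 + kI * U ^ 2) ≤ (kP - Bm) / 2)
    (hq2 : ε * U ≤ 1 / 2)
    (hq3 : ε * U ≤ β / 2)
    (hq4 : 2 * a ≤ (kP - Bm) / 2)
    (hq5 : 4 * a * β ≤ 3 / 4 * (ε * c ^ 2))
    (hξmbd : ∀ t ≥ (0:ℝ), ‖ξm t‖ ≤ Bm)
    (hAup : ∀ t ≥ (0:ℝ), ‖Aa t‖ ≤ U)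
    (hAlow : ∀ t ≥ (0:ℝ), ∀ X : Matrix (Fin n) (Fin n) ℝ, c * ‖X‖ ≤ ‖Aa t * X‖)
    (hdA : ∀ t ≥ (0:ℝ), HasDerivAt Aa (dA t) t)
    (hdAbd : ∀ t ≥ (0:ℝ), ‖dA t‖ ≤ U * Bm)
    (hE : ∀ t ≥ (0:ℝ), HasDerivAt E (E t * ξm t - Aa t * e t - kP • E t) t)
    (he : ∀ t ≥ (0:ℝ), HasDerivAt e (kI • ((Aa t)ᵀ * E t)) t) :
    ∀ t ≥ (0:ℝ), ‖E t‖ + ‖e t‖ ≤ C * (‖E 0‖ + ‖e 0‖) * Real.exp (-(a * t)) := by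
  have hβ : 0 < β := by rw [hβeq]; positivity
  have hW' : ∀ t ≥ (0:ℝ), HasDerivAt (lyapW β ε Aa E e) (lyapD β ε kP kI Aa dA E e ξm t) t :=
    fun t ht => lyapW_hasDerivAt β ε kP kI Aa dA E e ξm t (hdA t ht) (hE t ht) (he t ht)
  have hWcomp : ∀ t ≥ (0:ℝ),
      1/4 * ‖E t‖ ^ 2 + β / 2 * ‖e t‖ ^ 2 ≤ lyapW β ε Aa E e t ∧
      lyapW β ε Aa E e t ≤ ‖E t‖ ^ 2 + 2 * β * ‖e t‖ ^ 2 :=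
    fun t ht => lyapW_comp β ε U hβ hε hU hq2 hq3 Aa E e t (hAup t ht)
  have hkey : ∀ t ≥ (0:ℝ),
      lyapD β ε kP kI Aa dA E e ξm t + 2 * a * lyapW β ε Aa E e t ≤ 0 :=
    fun t ht => lyap_key kP kI Bm c U ε a β hBm hc hU hkI hkP hε ha hβeq
      hq1 hq2 hq3 hq4 hq5 Aa dA E e ξm t (hξmbd t ht) (hAup t ht)
      (hAlow t ht (e t)) (hdAbd t ht)
  set W := lyapW β ε Aa E e with hW_def
  set DW := lyapD β ε kP kI Aa dA E e ξm with hDW_def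
  have hmono : AntitoneOn (fun t => W t * Real.exp (2 * a * t)) (Set.Ici (0:ℝ)) := by
    have hd : ∀ t ≥ (0:ℝ), HasDerivAt (fun t => W t * Real.exp (2 * a * t))
        (DW t * Real.exp (2 * a * t) + W t * (Real.exp (2 * a * t) * (2 * a))) t := by
      intro t ht
      have h1 : HasDerivAt (fun t : ℝ => 2 * a * t) (2 * a) t := by
        simpa using (hasDerivAt_id t).const_mul (2 * a)
      exact (hW' t ht).mul h1.exp
    refine antitoneOn_of_deriv_nonpos (convex_Ici 0) ?_ ?_ ?_
    · intro t ht
      exact ((hd t ht).continuousAt).continuousWithinAt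
    · intro t ht
      rw [interior_Ici] at ht
      exact ((hd t (le_of_lt ht)).differentiableAt).differentiableWithinAt
    · intro t ht
      rw [interior_Ici] at ht
      rw [(hd t (le_of_lt ht)).deriv]
      have hk := hkey t (le_of_lt ht)
      nlinarith [(Real.exp_pos (2 * a * t)).le]
  have hdecayW : ∀ t ≥ (0:ℝ), W t ≤ W 0 * Real.exp (-(2 * a * t)) := by
    intro t ht
    have h1 := hmono Set.self_mem_Ici ht ht
    simp only [mul_zero, Real.exp_zero, mul_one] at h1
    have h2 := mul_le_mul_of_nonneg_right h1 (Real.exp_pos (-(2 * a * t))).le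
    rw [mul_assoc, ← Real.exp_add] at h2
    simpa using h2
  intro t ht
  have hl := (hWcomp t ht).1
  have hu0 := (hWcomp 0 le_rfl).2
  have hWt := hdecayW t ht
  have hCsq : C ^ 2 = (8 + 4 / β) * (1 + 2 * β) := by
    rw [hCeq]; exact Real.sq_sqrt (by positivity)
  have hexp2 : (Real.exp (-(a * t))) ^ 2 = Real.exp (-(2 * a * t)) := by
    rw [sq, ← Real.exp_add]; congr 1; ring
  have hx : (0:ℝ) ≤ ‖E t‖ := norm_nonneg _
  have hy : (0:ℝ) ≤ ‖e t‖ := norm_nonneg _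
  have hx0 : (0:ℝ) ≤ ‖E 0‖ := norm_nonneg _
  have hy0 : (0:ℝ) ≤ ‖e 0‖ := norm_nonneg _
  have hsq : (‖E t‖ + ‖e t‖) ^ 2 ≤ (C * (‖E 0‖ + ‖e 0‖) * Real.exp (-(a * t))) ^ 2 := by
    have h3 : W 0 ≤ (1 + 2 * β) * (‖E 0‖ + ‖e 0‖) ^ 2 := by
      nlinarith [mul_nonneg hx0 hy0, hβ.le]
    have hexp0 : (0:ℝ) ≤ Real.exp (-(2 * a * t)) := (Real.exp_pos _).le
    have hβinv : (0:ℝ) ≤ 2 / β := by positivity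
    have hid : (2 / β) * (β / 2) = 1 := by field_simp
    calc (‖E t‖ + ‖e t‖) ^ 2
        ≤ 2 * ((4 + 2 / β) * (1/4 * ‖E t‖ ^ 2 + β / 2 * ‖e t‖ ^ 2)) := by
          nlinarith [sq_nonneg (‖E t‖ - ‖e t‖), mul_nonneg hβinv (sq_nonneg ‖E t‖),
            mul_nonneg hβ.le (sq_nonneg ‖e t‖)]
      _ ≤ 2 * ((4 + 2 / β) * W t) := by gcongr <;> positivity
      _ ≤ 2 * ((4 + 2 / β) * (W 0 * Real.exp (-(2 * a * t)))) := by gcongr <;> positivity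
      _ ≤ 2 * ((4 + 2 / β) * ((1 + 2 * β) * (‖E 0‖ + ‖e 0‖) ^ 2 * Real.exp (-(2 * a * t)))) := by
          gcongr <;> positivity
      _ = (C * (‖E 0‖ + ‖e 0‖) * Real.exp (-(a * t))) ^ 2 := by
          rw [mul_pow, mul_pow, hCsq, hexp2]; ring
  have hC0 : (0:ℝ) ≤ C := by rw [hCeq]; positivity
  have hrhs : (0:ℝ) ≤ C * (‖E 0‖ + ‖e 0‖) * Real.exp (-(a * t)) :=
    mul_nonneg (mul_nonneg hC0 (by positivity)) (Real.exp_pos _).le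
  have h := Real.sqrt_le_sqrt hsq
  rwa [Real.sqrt_sq (by positivity), Real.sqrt_sq hrhs] at h

end GESCore
set_option maxHeartbeats 1000000 in
theorem observer_I_modified_unconstrained_bias_GES {n : ℕ}
    (𝔤 : LieSubalgebra ℝ (Matrix (Fin n) (Fin n) ℝ))
    (g ξ : ℝ → Matrix (Fin n) (Fin n) ℝ)
    (hξmem : ∀ t, ξ t ∈ 𝔤)
    (hg : ∀ t ≥ (0:ℝ), HasDerivAt g (g t * ξ t) t)
    (Bξ Bb Lg Ug : ℝ)
    (hBξ : 0 < Bξ) (hBb : 0 < Bb) (hLg : 0 < Lg) (hUg : 0 < Ug)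
    (hξbd : ∀ t ≥ (0:ℝ), ‖ξ t‖ ≤ Bξ)
    (hσ : ∀ t ≥ (0:ℝ), Lg ≤ sigmaMin (g t) ∧ sigmaMax (g t) ≤ Ug)
    (b : Matrix (Fin n) (Fin n) ℝ) (hbmem : b ∈ 𝔤) (hbbd : ‖b‖ ≤ Bb)
    (ξm : ℝ → Matrix (Fin n) (Fin n) ℝ) (hξm : ∀ t, ξm t = ξ t + b)
    (F : Matrix (Fin n) (Fin n) ℝ) (hF : IsUnit F)
    (A : ℝ → Matrix (Fin n) (Fin n) ℝ)
    (hA : ∀ t ≥ (0:ℝ), A t = F * g t)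
    (kP kI : ℝ) (hkP : Bξ + Bb < kP) (hkI : 0 < kI) :
    ∃ a > (0:ℝ), ∃ C > (0:ℝ),
      ∀ Abar bbar : ℝ → Matrix (Fin n) (Fin n) ℝ,
        (∀ t ≥ (0:ℝ), HasDerivAt Abar (Abar t * ξm t - A t * bbar t + kP • (A t - Abar t)) t) →
        (∀ t ≥ (0:ℝ), HasDerivAt bbar (-(kI • ((A t)ᵀ * (A t - Abar t)))) t) →
        ∀ t ≥ (0:ℝ),
          ‖A t - Abar t‖ + ‖b - bbar t‖ ≤
            C * (‖A 0 - Abar 0‖ + ‖b - bbar 0‖) * Real.exp (-(a * t)) := by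
  letI : NormedRing (Matrix (Fin n) (Fin n) ℝ) := Matrix.frobeniusNormedRing
  letI : NormedAlgebra ℝ (Matrix (Fin n) (Fin n) ℝ) := Matrix.frobeniusNormedAlgebra
  letI : InnerProductSpace ℝ (Matrix (Fin n) (Fin n) ℝ) := matIPS_s7
  -- trivial case n = 0
  rcases Nat.eq_zero_or_pos n with hn | hn
  · subst hn
    refine ⟨1, one_pos, 1, one_pos, fun Abar bbar _ _ t _ => ?_⟩
    have h0 : ∀ X : Matrix (Fin 0) (Fin 0) ℝ, ‖X‖ = 0 := fun X => by
      rw [show X = 0 from Subsingleton.elim X 0, norm_zero]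
    simp only [h0]
    simp [le_of_lt (Real.exp_pos _)]
  -- constants
  obtain ⟨cF, hcF, hFlow⟩ := unit_lower F hF
  set Bm : ℝ := Bξ + Bb with hBm_def
  have hBm : 0 < Bm := by positivity
  set δ : ℝ := kP - Bm with hδ_def
  have hδ : 0 < δ := by simp only [hδ_def]; linarith
  have hkP0 : 0 < kP := lt_trans hBm hkP
  set c : ℝ := cF * Lg with hc_def
  have hc : 0 < c := by positivity
  set U : ℝ := ‖F‖ * (Real.sqrt n * Ug) + 1 with hU_def
  have hU : 0 < U := by positivity
  set β : ℝ := 1 / (2 * kI) with hβ_def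
  have hβ : 0 < β := by positivity
  set K1 : ℝ := U * (2 * Bm + kP) with hK1_def
  have hK1 : 0 < K1 := by positivity
  set K2 : ℝ := kI * U ^ 2 with hK2_def
  have hK2 : 0 < K2 := by positivity
  set S : ℝ := K1 ^ 2 / c ^ 2 + K2 with hS_def
  have hS : 0 < S := by positivity
  set D1 : ℝ := 2 * S / δ + 2 * U / β + 2 * U + 1 with hD1_def
  have hD1 : 0 < D1 := by positivity
  set ε : ℝ := 1 / D1 with hε_def
  have hε : 0 < ε := by positivity
  set D2 : ℝ := 4 / δ + 16 * β / (3 * ε * c ^ 2) + 1 with hD2_def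
  have hD2 : 0 < D2 := by positivity
  set a : ℝ := 1 / D2 with ha_def
  have ha : 0 < a := by positivity
  set C : ℝ := Real.sqrt ((8 + 4 / β) * (1 + 2 * β)) with hC_def
  have hC : 0 < C := Real.sqrt_pos.mpr (by positivity)
  -- constraints on the constants
  have hc1 : ε * S ≤ δ / 2 := by
    have h1 : ε ≤ 1 / (2 * S / δ) := by
      refine one_div_le_one_div_of_le (by positivity) ?_
      simp only [hD1_def]
      have : 0 ≤ 2 * U / β := by positivity
      have : 0 ≤ 2 * U := by positivity
      linarith
    have h2 : (1 : ℝ) / (2 * S / δ) = δ / (2 * S) := by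
      rw [one_div_div]
    rw [h2] at h1
    calc ε * S ≤ δ / (2 * S) * S := mul_le_mul_of_nonneg_right h1 hS.le
      _ = δ / 2 := by field_simp
  have hc2 : ε * U ≤ 1 / 2 := by
    have h1 : ε ≤ 1 / (2 * U) := by
      refine one_div_le_one_div_of_le (by positivity) ?_
      simp only [hD1_def]
      have : 0 ≤ 2 * S / δ := by positivity
      have : 0 ≤ 2 * U / β := by positivity
      linarith
    calc ε * U ≤ 1 / (2 * U) * U := mul_le_mul_of_nonneg_right h1 hU.le
      _ = 1 / 2 := by field_simp
  have hc3 : ε * U ≤ β / 2 := by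
    have h1 : ε ≤ 1 / (2 * U / β) := by
      refine one_div_le_one_div_of_le (by positivity) ?_
      simp only [hD1_def]
      have : 0 ≤ 2 * S / δ := by positivity
      have : 0 ≤ 2 * U := by positivity
      linarith
    rw [one_div_div] at h1
    calc ε * U ≤ β / (2 * U) * U := mul_le_mul_of_nonneg_right h1 hU.le
      _ = β / 2 := by field_simp
  have ha1 : 2 * a ≤ δ / 2 := by
    have h1 : a ≤ 1 / (4 / δ) := by
      refine one_div_le_one_div_of_le (by positivity) ?_
      simp only [hD2_def]
      have : 0 ≤ 16 * β / (3 * ε * c ^ 2) := by positivity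
      linarith
    rw [one_div_div] at h1
    linarith
  have ha2 : 4 * a * β ≤ 3 / 4 * (ε * c ^ 2) := by
    have h1 : a ≤ 1 / (16 * β / (3 * ε * c ^ 2)) := by
      refine one_div_le_one_div_of_le (by positivity) ?_
      simp only [hD2_def]
      have : 0 ≤ 4 / δ := by positivity
      linarith
    rw [one_div_div] at h1
    have h2 := mul_le_mul_of_nonneg_right h1 hβ.le
    calc 4 * a * β = 4 * (a * β) := by ring
      _ ≤ 4 * (3 * ε * c ^ 2 / (16 * β) * β) := by linarith
      _ = 3 / 4 * (ε * c ^ 2) := by field_simp; ring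
  -- pointwise matrix bounds
  have hgup : ∀ t ≥ (0:ℝ), ∀ v : EuclideanSpace ℝ (Fin n),
      ‖(Matrix.toEuclideanCLM (𝕜 := ℝ) (g t)) v‖ ≤ Ug * ‖v‖ := fun t ht v =>
    (vec_le_sigmaMax _ v).trans (mul_le_mul_of_nonneg_right (hσ t ht).2 (norm_nonneg v))
  have hAup : ∀ t ≥ (0:ℝ), ‖F * g t‖ ≤ U := by
    intro t ht
    have h1 : ‖g t‖ ≤ Real.sqrt n * Ug := frob_upper _ Ug hUg.le (hgup t ht)
    calc ‖F * g t‖ ≤ ‖F‖ * ‖g t‖ := norm_mul_le F (g t)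
      _ ≤ ‖F‖ * (Real.sqrt n * Ug) := mul_le_mul_of_nonneg_left h1 (norm_nonneg F)
      _ ≤ U := by simp only [hU_def]; linarith
  have hAlow : ∀ t ≥ (0:ℝ), ∀ X : Matrix (Fin n) (Fin n) ℝ, c * ‖X‖ ≤ ‖(F * g t) * X‖ := by
    intro t ht
    refine col_lower _ c hc.le (fun v => ?_)
    have h1 : (Matrix.toEuclideanCLM (𝕜 := ℝ) (F * g t)) v =
        (Matrix.toEuclideanCLM (𝕜 := ℝ) F) ((Matrix.toEuclideanCLM (𝕜 := ℝ) (g t)) v) := by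
      rw [_root_.map_mul]; rfl
    rw [h1]
    have h2 : Lg * ‖v‖ ≤ ‖(Matrix.toEuclideanCLM (𝕜 := ℝ) (g t)) v‖ :=
      le_trans (mul_le_mul_of_nonneg_right (hσ t ht).1 (norm_nonneg v)) (sigmaMin_le_vec _ v)
    calc c * ‖v‖ = cF * (Lg * ‖v‖) := by rw [hc_def]; ring
      _ ≤ cF * ‖(Matrix.toEuclideanCLM (𝕜 := ℝ) (g t)) v‖ := mul_le_mul_of_nonneg_left h2 hcF.le
      _ ≤ ‖(Matrix.toEuclideanCLM (𝕜 := ℝ) F) ((Matrix.toEuclideanCLM (𝕜 := ℝ) (g t)) v)‖ :=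
          hFlow _
  have hξmbd : ∀ t ≥ (0:ℝ), ‖ξm t‖ ≤ Bm := by
    intro t ht
    rw [hξm]
    exact (norm_add_le _ _).trans (add_le_add (hξbd t ht) hbbd)
  have hdAbd : ∀ t ≥ (0:ℝ), ‖F * (g t * ξ t)‖ ≤ U * Bm := by
    intro t ht
    calc ‖F * (g t * ξ t)‖ = ‖(F * g t) * ξ t‖ := by rw [mul_assoc]
      _ ≤ ‖F * g t‖ * ‖ξ t‖ := norm_mul_le _ _
      _ ≤ U * Bξ := mul_le_mul (hAup t ht) (hξbd t ht) (norm_nonneg _) hU.le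
      _ ≤ U * Bm := by
          rw [hBm_def]
          nlinarith [hBb, hU]
  refine ⟨a, ha, C, hC, fun Abar bbar hAbar hbbar => ?_⟩
  have hEeq : ∀ t ≥ (0:ℝ), A t - Abar t = F * g t - Abar t := by
    intro t ht
    rw [hA t ht]
  have hdAa : ∀ t ≥ (0:ℝ), HasDerivAt (fun s => F * g s) (F * (g t * ξ t)) t :=
    fun t ht => (hg t ht).const_mul F
  have hE' : ∀ t ≥ (0:ℝ), HasDerivAt (fun s => F * g s - Abar s)
      ((F * g t - Abar t) * ξm t - (F * g t) * (b - bbar t) - kP • (F * g t - Abar t)) t := by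
    intro t ht
    have h1 := ((hg t ht).const_mul F).sub (hAbar t ht)
    refine h1.congr_deriv ?_
    rw [hξm, hA t ht]
    simp only [mul_add, sub_mul, mul_sub, mul_assoc, smul_sub]
    abel
  have he' : ∀ t ≥ (0:ℝ), HasDerivAt (fun s => b - bbar s)
      (kI • ((F * g t)ᵀ * (F * g t - Abar t))) t := by
    intro t ht
    have h1 := (hbbar t ht).const_sub b
    refine h1.congr_deriv ?_
    rw [neg_neg, hA t ht]
  have hmain := GES_core (fun s => F * g s) (fun s => F * (g s * ξ s))
      (fun s => F * g s - Abar s) (fun s => b - bbar s) ξm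
      kP kI Bm c U ε a β C hBm hc hU hkI hkP hε ha hβ_def hC_def
      hc1 hc2 hc3 ha1 ha2 hξmbd hAup hAlow hdAa hdAbd hE' he'
  intro t ht
  have h1 := hmain t ht
  rw [hEeq t ht, hEeq 0 le_rfl]
  exact h1
end

section
/- Suppose A : [0,∞) → ℝ^{n×n} is differentiable with A(t) invertible for all t ≥ 0 and A'(t) = A(t) ξ(t) where ξ(t) ∈ 𝔤, let b ∈ 𝔤 be constant and ξ_m(t) = ξ(t) + b, and let (Ā, b̄) : [0,∞) → ℝ^{n×n} × 𝔤 be a differentiable solution of Ā'(t) = Ā(t) ξ_m(t) − A(t) b̄(t) + k_P (A(t) − Ā(t)) and b̄'(t) = −k_I π_𝔤(A(t)⁻¹ (A(t) − Ā(t))) for constants k_P, k_I. Then 𝓔_A(t) := I − A(t)⁻¹ Ā(t) and e_b(t) := b − b̄(t) satisfy 𝓔_A'(t) = 𝓔_A(t) ξ_m(t) − ξ(t) 𝓔_A(t) − e_b(t) − k_P 𝓔_A(t) and e_b'(t) = k_I π_𝔤(𝓔_A(t)) for all t ≥ 0. -/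
attribute [local instance] Matrix.frobeniusNormedRing Matrix.frobeniusNormedAlgebra


open Matrix

attribute [local instance] Matrix.frobeniusNormedAddCommGroup Matrix.frobeniusNormedSpace
attribute [local instance 100] LieRing.ofAssociativeRing

theorem observer_variant_I_error_dynamics {n : ℕ}
    (𝔤 : LieSubalgebra ℝ (Matrix (Fin n) (Fin n) ℝ))
    (proj : Matrix (Fin n) (Fin n) ℝ →ₗ[ℝ] Matrix (Fin n) (Fin n) ℝ)
    (hproj_mem : ∀ X, proj X ∈ 𝔤)
    (hproj_id : ∀ X ∈ 𝔤, proj X = X)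
    (hproj_orth : ∀ X, ∀ Y ∈ 𝔤, finner (X - proj X) Y = 0)
    (ξ : ℝ → Matrix (Fin n) (Fin n) ℝ) (hξmem : ∀ t, ξ t ∈ 𝔤)
    (A : ℝ → Matrix (Fin n) (Fin n) ℝ)
    (hAinv : ∀ t ≥ (0:ℝ), IsUnit (A t))
    (hA : ∀ t ≥ (0:ℝ), HasDerivAt A (A t * ξ t) t)
    (b : Matrix (Fin n) (Fin n) ℝ) (hbmem : b ∈ 𝔤)
    (ξm : ℝ → Matrix (Fin n) (Fin n) ℝ) (hξm : ∀ t, ξm t = ξ t + b)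
    (kP kI : ℝ)
    (Abar bbar : ℝ → Matrix (Fin n) (Fin n) ℝ)
    (hbbar_mem : ∀ t, bbar t ∈ 𝔤)
    (hAbar : ∀ t ≥ (0:ℝ), HasDerivAt Abar (Abar t * ξm t - A t * bbar t + kP • (A t - Abar t)) t)
    (hbbar : ∀ t ≥ (0:ℝ), HasDerivAt bbar (-(kI • proj ((A t)⁻¹ * (A t - Abar t)))) t) :
    ∀ t ≥ (0:ℝ),
      HasDerivAt (fun s => 1 - (A s)⁻¹ * Abar s)
        ((1 - (A t)⁻¹ * Abar t) * ξm t - ξ t * (1 - (A t)⁻¹ * Abar t)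
          - (b - bbar t) - kP • (1 - (A t)⁻¹ * Abar t)) t ∧
      HasDerivAt (fun s => b - bbar s) (kI • proj (1 - (A t)⁻¹ * Abar t)) t := by
  intro t ht
  have hU := hAinv t ht
  have hdet : IsUnit (A t).det := (Matrix.isUnit_iff_isUnit_det (A t)).mp hU
  have hXA : (A t)⁻¹ * A t = 1 := Matrix.nonsing_inv_mul (A t) hdet
  have hcancel : ∀ X : Matrix (Fin n) (Fin n) ℝ, (A t)⁻¹ * (A t * X) = X := by
    intro X; rw [← mul_assoc, hXA, one_mul]
  -- derivative of the inverse
  have hinv : HasDerivAt (fun s => (A s)⁻¹)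
      (-((A t)⁻¹ * (A t * ξ t) * (A t)⁻¹)) t := by
    have h1 := hasFDerivAt_ringInverse (𝕜 := ℝ) hU.unit
    have h2 : HasDerivAt (fun s => Ring.inverse (A s))
        (-((↑(hU.unit⁻¹) : Matrix (Fin n) (Fin n) ℝ) * (A t * ξ t) * (↑(hU.unit⁻¹) : Matrix (Fin n) (Fin n) ℝ))) t := by
      have := h1.comp_hasDerivAt t (by exact hA t ht)
      exact this
    have hco : (↑(hU.unit⁻¹) : Matrix (Fin n) (Fin n) ℝ) = (A t)⁻¹ := by
      rw [Matrix.nonsing_inv_eq_ringInverse]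
      exact (Ring.inverse_unit hU.unit).symm
    simp only [← Matrix.nonsing_inv_eq_ringInverse, hco] at h2
    exact h2
  constructor
  · have hE : HasDerivAt (fun s => 1 - (A s)⁻¹ * Abar s)
        (0 - ((-((A t)⁻¹ * (A t * ξ t) * (A t)⁻¹)) * Abar t
          + (A t)⁻¹ * (Abar t * ξm t - A t * bbar t + kP • (A t - Abar t)))) t :=
      (hasDerivAt_const t (1 : Matrix (Fin n) (Fin n) ℝ)).sub (hinv.mul (hAbar t ht))
    convert hE using 1
    simp only [hξm, hcancel, zero_sub, mul_add, add_mul, sub_mul, mul_sub, smul_sub,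
      mul_one, one_mul, mul_assoc, Matrix.mul_smul, neg_mul, neg_add, neg_sub, neg_neg, hXA]
    abel
  · have hb : HasDerivAt (fun s => b - bbar s)
        (0 - (-(kI • proj ((A t)⁻¹ * (A t - Abar t))))) t :=
      (hasDerivAt_const t b).sub (hbbar t ht)
    have hq : (A t)⁻¹ * (A t - Abar t) = 1 - (A t)⁻¹ * Abar t := by
      rw [mul_sub, hXA]
    rw [← hq]
    simpa using hb
end

section
/- Let k_P, k_I, B_ξ, B_b, L, U, f, λ be positive constants with k_P > B_ξ + B_b, and set H = 4 (k_P − B_ξ − B_b) L² λ / ((4 k_I L² λ + (k_P + B_b + 2 B_ξ)²) U² f²). Then for every ε with 0 < ε < H, the quadratic form on ℝ² given by V₃(x, y) = (k_P − (B_ξ + B_b) − ε k_I U² f²) x² + ε λ L² y² − ε (k_P + B_b + 2 B_ξ) U f x y is positive definite, i.e. V₃(x, y) > 0 for all (x, y) ≠ (0, 0). -/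
private lemma quad_pos_aux (a b c x y : ℝ) (ha : 0 < a)
    (hd : b ^ 2 < 4 * a * c) (hxy : (x, y) ≠ (0, 0)) :
    0 < a * x ^ 2 + c * y ^ 2 - b * x * y := by
  rcases eq_or_ne y 0 with hy | hy
  · subst hy
    have hx : x ≠ 0 := by simpa using hxy
    have hx2 : 0 < x ^ 2 := by positivity
    nlinarith [mul_pos ha hx2]
  · have hy2 : 0 < y ^ 2 := by positivity
    nlinarith [sq_nonneg (2 * a * x - b * y), mul_pos (sub_pos.mpr hd) hy2]

theorem V3_pos_def (kP kI Bξ Bb L U f lam : ℝ)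
    (hkP0 : 0 < kP) (hkI : 0 < kI) (hBξ : 0 < Bξ) (hBb : 0 < Bb)
    (hL : 0 < L) (hU : 0 < U) (hf : 0 < f) (hlam : 0 < lam)
    (hkP : Bξ + Bb < kP)
    (H : ℝ)
    (hH : H = 4 * (kP - Bξ - Bb) * L ^ 2 * lam /
      ((4 * kI * L ^ 2 * lam + (kP + Bb + 2 * Bξ) ^ 2) * U ^ 2 * f ^ 2))
    (ε : ℝ) (hε : 0 < ε) (hεH : ε < H) :
    ∀ x y : ℝ, (x, y) ≠ (0, 0) →
      0 < (kP - (Bξ + Bb) - ε * kI * U ^ 2 * f ^ 2) * x ^ 2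
          + ε * lam * L ^ 2 * y ^ 2
          - ε * (kP + Bb + 2 * Bξ) * U * f * x * y := by
  have hden : 0 < (4 * kI * L ^ 2 * lam + (kP + Bb + 2 * Bξ) ^ 2) * U ^ 2 * f ^ 2 := by
    positivity
  have hkey : ε * ((4 * kI * L ^ 2 * lam + (kP + Bb + 2 * Bξ) ^ 2) * U ^ 2 * f ^ 2)
      < 4 * (kP - Bξ - Bb) * L ^ 2 * lam := by
    rw [hH] at hεH
    exact (lt_div_iff₀ hden).mp hεH
  have hL2 : 0 < L ^ 2 := by positivity
  have ha : 0 < kP - (Bξ + Bb) - ε * kI * U ^ 2 * f ^ 2 := by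
    nlinarith [mul_nonneg (mul_nonneg (mul_nonneg hε.le (sq_nonneg (kP + Bb + 2 * Bξ)))
      (sq_nonneg U)) (sq_nonneg f), mul_pos hL2 hlam]
  intro x y hxy
  have hc : 0 < ε * lam * L ^ 2 := by positivity
  have hdisc : (ε * (kP + Bb + 2 * Bξ) * U * f) ^ 2
      < 4 * (kP - (Bξ + Bb) - ε * kI * U ^ 2 * f ^ 2) * (ε * lam * L ^ 2) := by
    nlinarith [mul_pos hε hε, mul_lt_mul_of_pos_left hkey hε]
  have := quad_pos_aux _ (ε * (kP + Bb + 2 * Bξ) * U * f) _ x y ha hdisc hxy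
  linarith [this]
end
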